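/- arXiv:1708.03283 — 6 statements merged into one kernel-verified Lean document; each statement's English description precedes it below -/
import Mathlib

section
/- Let H be the Hamiltonian of a weighted path on n vertices with potentials, i.e., a real symmetric tridiagonal n×n matrix with positive off-diagonal entries H_{j,j+1} = r_j > 0 and arbitrary real diagonal entries. If there is perfect state transfer from vertex 1 to vertex n at time t_0, then for every j with 2 ≤ j ≤ n-1 there is perfect state transfer from vertex j to vertex n+1-j at the same time t_0. -/
open Matrix

/-- The Hamiltonian (adjacency matrix with potentials) of a weighted path on `n`
vertices: tridiagonal, with diagonal entries `q 1, …, q n` (potentials) and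
off-diagonal entries `r 1, …, r (n-1)` (edge weights); 1-based vertex labels. -/
noncomputable def pathHamiltonian (n : ℕ) (q r : ℕ → ℝ) : Matrix (Fin n) (Fin n) ℝ :=
  Matrix.of fun j k =>
    if (j : ℕ) = (k : ℕ) then q ((j : ℕ) + 1)
    else if (j : ℕ) + 1 = (k : ℕ) then r ((j : ℕ) + 1)
    else if (k : ℕ) + 1 = (j : ℕ) then r ((k : ℕ) + 1)
    else 0

/-- `|(e^{itH})_{j,k}|` for a real symmetric Hamiltonian `H`. -/
noncomputable def transferAmp (n : ℕ) (H : Matrix (Fin n) (Fin n) ℝ) (t : ℝ) (j k : Fin n) : ℝ :=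
  ‖(NormedSpace.exp ((Complex.I * (t : ℂ)) • H.map (fun x => (x : ℂ))) j k)‖

/-- helper: nonneg reals summing to 1 with one term equal to 1 ⇒ the rest vanish. -/
lemma aux_sum_eq_one {ι : Type*} [Fintype ι] [DecidableEq ι] (f : ι → ℝ)
    (h0 : ∀ i, 0 ≤ f i) (hsum : ∑ i, f i = 1) (k₀ : ι) (hk₀ : f k₀ = 1) :
    ∀ k, k ≠ k₀ → f k = 0 := by
  intro k hk
  have h1 : f k₀ + ∑ i ∈ Finset.univ.erase k₀, f i = 1 := by
    rw [Finset.add_sum_erase _ f (Finset.mem_univ k₀)]; exact hsum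
  have h2 : ∑ i ∈ Finset.univ.erase k₀, f i = 0 := by linarith
  have := (Finset.sum_eq_zero_iff_of_nonneg (fun i _ => h0 i)).mp h2
  exact this k (Finset.mem_erase.mpr ⟨hk, Finset.mem_univ k⟩)

lemma aux_sum_single {ι : Type*} [Fintype ι] [DecidableEq ι] (f : ι → ℝ)
    (hsum : ∑ i, f i = 1) (k₀ : ι) (hz : ∀ k, k ≠ k₀ → f k = 0) : f k₀ = 1 := by
  rw [← hsum, Finset.sum_eq_single k₀ (fun b _ hb => hz b hb) (fun h => absurd (Finset.mem_univ k₀) h)]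

/-- For a weighted path with potentials, PST from vertex `1` to vertex `n` at time `t₀`
implies PST from vertex `j` to vertex `n+1-j` at the same time, for all `2 ≤ j ≤ n-1`. -/
theorem pst_endpoints_implies_pst_internal (n : ℕ) (hn : 1 ≤ n) (q r : ℕ → ℝ)
    (hr : ∀ j, 1 ≤ j → j ≤ n - 1 → 0 < r j) (t₀ : ℝ)
    (hpst : transferAmp n (pathHamiltonian n q r) t₀ ⟨0, by omega⟩ ⟨n - 1, by omega⟩ = 1) :
    ∀ j (_ : 2 ≤ j) (_ : j ≤ n - 1),
      transferAmp n (pathHamiltonian n q r) t₀ ⟨j - 1, by omega⟩ ⟨n - j, by omega⟩ = 1 := by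
  set H := pathHamiltonian n q r with hHdef
  set A : Matrix (Fin n) (Fin n) ℂ := H.map (fun x => (x : ℂ)) with hAdef
  set M : Matrix (Fin n) (Fin n) ℂ := (Complex.I * (t₀ : ℂ)) • A with hM
  set U := NormedSpace.exp M with hU
  -- entries of A
  have hA0 : ∀ j k : Fin n, (j : ℕ) ≠ (k : ℕ) → (j : ℕ) + 1 ≠ (k : ℕ) → (k : ℕ) + 1 ≠ (j : ℕ) →
      A j k = 0 := by
    intro j k h1 h2 h3
    simp [hAdef, hHdef, pathHamiltonian, Matrix.map_apply, h1, h2, h3]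
  have hAr : ∀ j k : Fin n, (j : ℕ) + 1 = (k : ℕ) → A j k = (r ((j : ℕ) + 1) : ℂ) := by
    intro j k h1
    have h2 : (j : ℕ) ≠ (k : ℕ) := by omega
    simp [hAdef, hHdef, pathHamiltonian, Matrix.map_apply, h1, h2]
  -- symmetry of A
  have hHsym : ∀ j k : Fin n, H j k = H k j := by
    intro j k
    simp only [hHdef, pathHamiltonian, Matrix.of_apply]
    split_ifs <;> first | rfl | omega | (congr 1; omega)
  have hAH : Aᴴ = A := by
    ext j k
    simp only [Matrix.conjTranspose_apply, hAdef, Matrix.map_apply, RCLike.star_def,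
      Complex.conj_ofReal]
    exact_mod_cast (hHsym k j)
  have hMH : Mᴴ = -M := by
    rw [hM, Matrix.conjTranspose_smul, hAH]
    rw [show star (Complex.I * (t₀:ℂ)) = -(Complex.I * (t₀:ℂ)) by simp [Complex.ext_iff]]
    rw [neg_smul]
  have hexp : NormedSpace.exp M * NormedSpace.exp (-M) = 1 := by
    have h := Matrix.exp_add_of_commute M (-M) ((Commute.refl M).neg_right)
    rw [add_neg_cancel] at h
    rw [← h]; exact NormedSpace.exp_zero
  have hexp' : NormedSpace.exp (-M) * NormedSpace.exp M = 1 := by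
    have h := Matrix.exp_add_of_commute (-M) M ((Commute.refl M).neg_left)
    rw [neg_add_cancel] at h
    rw [← h]; exact NormedSpace.exp_zero
  have hUU : U * Uᴴ = 1 := by
    rw [hU, ← Matrix.exp_conjTranspose, hMH]; exact hexp
  have hUUc : Uᴴ * U = 1 := by
    rw [hU, ← Matrix.exp_conjTranspose, hMH]; exact hexp'
  have hcomm : A * U = U * A := by
    letI : SeminormedRing (Matrix (Fin n) (Fin n) ℂ) := Matrix.linftyOpSemiNormedRing
    letI : NormedRing (Matrix (Fin n) (Fin n) ℂ) := Matrix.linftyOpNormedRing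
    letI : NormedAlgebra ℂ (Matrix (Fin n) (Fin n) ℂ) := Matrix.linftyOpNormedAlgebra
    exact ((Commute.refl A).smul_right _).exp_right
  -- row and column norms
  have rowNorm : ∀ j : Fin n, ∑ k, Complex.normSq (U j k) = 1 := by
    intro j
    have h := congrFun (congrFun hUU j) j
    rw [Matrix.mul_apply] at h
    simp only [Matrix.conjTranspose_apply, Matrix.one_apply_eq, RCLike.star_def] at h
    have h2 : ((∑ k, Complex.normSq (U j k) : ℝ) : ℂ) = 1 := by
      push_cast
      rw [← h]
      exact Finset.sum_congr rfl fun k _ => (Complex.mul_conj (U j k)).symm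
    exact_mod_cast h2
  have colNorm : ∀ k : Fin n, ∑ j, Complex.normSq (U j k) = 1 := by
    intro k
    have h := congrFun (congrFun hUUc k) k
    rw [Matrix.mul_apply] at h
    simp only [Matrix.conjTranspose_apply, Matrix.one_apply_eq, RCLike.star_def] at h
    have h2 : ((∑ j, Complex.normSq (U j k) : ℝ) : ℂ) = 1 := by
      push_cast
      rw [← h]
      refine Finset.sum_congr rfl fun j _ => ?_
      rw [mul_comm]
      exact (Complex.mul_conj (U j k)).symm
    exact_mod_cast h2
  have normSq_one : ∀ (z : ℂ), ‖z‖ = 1 → Complex.normSq z = 1 := by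
    intro z hz
    rw [← Complex.sq_norm, hz]; norm_num
  have rowZero : ∀ (j k₀ : Fin n), ‖U j k₀‖ = 1 → ∀ k, k ≠ k₀ → U j k = 0 := by
    intro j k₀ h1 k hk
    have := aux_sum_eq_one (fun k => Complex.normSq (U j k)) (fun i => Complex.normSq_nonneg _)
      (rowNorm j) k₀ (normSq_one _ h1) k hk
    exact Complex.normSq_eq_zero.mp this
  have colZero : ∀ (j₀ k : Fin n), ‖U j₀ k‖ = 1 → ∀ j, j ≠ j₀ → U j k = 0 := by
    intro j₀ k h1 j hj
    have := aux_sum_eq_one (fun j => Complex.normSq (U j k)) (fun i => Complex.normSq_nonneg _)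
      (colNorm k) j₀ (normSq_one _ h1) j hj
    exact Complex.normSq_eq_zero.mp this
  have rowFull : ∀ (j k₀ : Fin n), (∀ k, k ≠ k₀ → U j k = 0) → ‖U j k₀‖ = 1 := by
    intro j k₀ hz
    have h1 : Complex.normSq (U j k₀) = 1 := by
      apply aux_sum_single (fun k => Complex.normSq (U j k)) (rowNorm j) k₀
      intro k hk
      simp [hz k hk]
    rw [Complex.norm_def, h1, Real.sqrt_one]
  -- commutation entrywise
  have hcommE : ∀ j k : Fin n, ∑ m, A j m * U m k = ∑ m, U j m * A m k := by
    intro j k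
    have h := congrFun (congrFun hcomm j) k
    rw [Matrix.mul_apply, Matrix.mul_apply] at h
    exact h
  -- base point from hpst
  have hbase : ‖U ⟨0, by omega⟩ ⟨n - 1, by omega⟩‖ = 1 := hpst
  -- main induction
  have key : ∀ j : ℕ, ∀ hjn : j ≤ n - 1,
      (∀ k : Fin n, (k : ℕ) + j ≠ n - 1 → U ⟨j, by omega⟩ k = 0) ∧
      ‖U ⟨j, by omega⟩ ⟨n - 1 - j, by omega⟩‖ = 1 := by
    intro j
    induction j using Nat.strong_induction_on with
    | _ j ih =>
      intro hj
      rcases Nat.eq_zero_or_pos j with hj0 | hj0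
      · subst hj0
        have habs : ‖U ⟨0, by omega⟩ ⟨n - 1 - 0, by omega⟩‖ = 1 := hbase
        refine ⟨?_, habs⟩
        intro k hk
        apply rowZero _ _ habs
        intro hkk
        apply hk
        have hv : (k : ℕ) = n - 1 - 0 := congrArg Fin.val hkk
        omega
      · -- j = i + 1
        obtain ⟨i, rfl⟩ : ∃ i, j = i + 1 := ⟨j - 1, by omega⟩
        have hi : i ≤ n - 1 := by omega
        have Si := ih i (by omega) hi
        -- zeros in row i+1
        have hzeros : ∀ k : Fin n, (k : ℕ) + (i + 1) ≠ n - 1 → U ⟨i + 1, by omega⟩ k = 0 := by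
          intro k hk
          rcases le_or_gt (n - 1) ((k : ℕ) + i) with hge | hlt
          · -- k is a mirror of some i' ≤ i : use column fact
            set i' : ℕ := n - 1 - (k : ℕ) with hi'
            have hi'le : i' ≤ i := by omega
            have Si' := ih i' (by omega) (by omega)
            have hmir : (⟨n - 1 - i', by omega⟩ : Fin n) = k :=
              Fin.ext (show n - 1 - i' = (k : ℕ) by omega)
            have habs : ‖U ⟨i', by omega⟩ k‖ = 1 := by
              have h2 := Si'.2; rwa [hmir] at h2
            apply colZero _ _ habs
            intro hcontra
            have : i + 1 = i' := by
              have := congrArg (Fin.val) hcontra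
              simpa using this
            omega
          · -- k + i + 2 ≤ n - 1 : use the commutation relation on row i
            have hkn : (k : ℕ) + i + 2 ≤ n - 1 := by omega
            have hEq := hcommE ⟨i, by omega⟩ k
            -- RHS is zero
            have hR : ∑ m, U ⟨i, by omega⟩ m * A m k = 0 := by
              apply Finset.sum_eq_zero
              intro m _
              rcases eq_or_ne ((m : ℕ) + i) (n - 1) with hm | hm
              · have hAz : A m k = 0 := by
                  apply hA0 <;> omega
                rw [hAz, mul_zero]
              · rw [Si.1 m hm, zero_mul]
            -- LHS reduces to the single term m = i+1
            have hL : ∑ m, A ⟨i, by omega⟩ m * U m k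
                = A ⟨i, by omega⟩ ⟨i + 1, by omega⟩ * U ⟨i + 1, by omega⟩ k := by
              apply Finset.sum_eq_single
              · intro m _ hm
                have hmv : (m : ℕ) ≠ i + 1 := by
                  intro hcontra
                  exact hm (Fin.ext hcontra)
                rcases eq_or_ne ((m : ℕ)) i with hmi | hmi
                · -- m = i : U m k = 0 since k + i ≠ n-1
                  have : U m k = 0 := by
                    have : (⟨i, by omega⟩ : Fin n) = m := Fin.ext hmi.symm
                    rw [← this]
                    exact Si.1 k (by omega)
                  rw [this, mul_zero]
                · rcases eq_or_ne ((m : ℕ) + 1) i with hmi1 | hmi1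
                  · -- m = i - 1 : use ih at m
                    have Sm := ih (m : ℕ) (by omega) (by omega)
                    have : U m k = 0 := by
                      have hme : (⟨(m : ℕ), by omega⟩ : Fin n) = m := Fin.ext rfl
                      rw [← hme]
                      exact Sm.1 k (by omega)
                    rw [this, mul_zero]
                  · -- A entry vanishes
                    have : A ⟨i, by omega⟩ m = 0 := by
                      apply hA0 <;> simp only [] <;> omega
                    rw [this, zero_mul]
              · intro h; exact absurd (Finset.mem_univ _) h
            have hrpos : A ⟨i, by omega⟩ ⟨i + 1, by omega⟩ = (r (i + 1) : ℂ) := by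
              apply hAr; simp only []
            have hrne : (r (i + 1) : ℂ) ≠ 0 := by
              have := hr (i + 1) (by omega) (by omega)
              exact_mod_cast ne_of_gt this
            have : (r (i + 1) : ℂ) * U ⟨i + 1, by omega⟩ k = 0 := by
              rw [← hrpos, ← hL, hEq, hR]
            exact (mul_eq_zero.mp this).resolve_left hrne
        refine ⟨hzeros, ?_⟩
        apply rowFull
        intro k hk
        apply hzeros
        intro hcontra
        apply hk
        exact Fin.ext (show (k : ℕ) = n - 1 - (i + 1) by omega)
  -- conclude
  intro j hj2 hjn
  have hkey := key (j - 1) (by omega)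
  have hmir : (⟨n - 1 - (j - 1), by omega⟩ : Fin n) = ⟨n - j, by omega⟩ :=
    Fin.ext (show n - 1 - (j - 1) = n - j by omega)
  have := hkey.2
  rw [hmir] at this
  exact this
end

section
/- Let n ≥ 2 be even and let A be a persymmetric real symmetric tridiagonal n×n matrix with off-diagonal entries A_{j,j+1} = r_j > 0 and diagonal entries A_{j,j} = q_j. Let α_1 < α_2 < ... < α_n be the eigenvalues of A, and set S_1 = Σ_{r=1}^n (-1)^{r+n} α_r and S_2 = Σ_{r=1}^n (-1)^{r+n} α_r². Then r_{n/2} = S_1/2 and q_{n/2} = S_2/(2S_1). -/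
open Matrix Polynomial

section Aux
open Finset

/-- two-step induction -/
private lemma two_step {C : ℕ → Prop} (h0 : C 0) (h1 : C 1)
    (ih : ∀ t, C t → C (t+1) → C (t+2)) : ∀ t, C t := by
  have H : ∀ t, C t ∧ C (t+1) := by
    intro t
    induction t with
    | zero => exact ⟨h0, h1⟩
    | succ k hk => exact ⟨hk.2, ih k hk.1 hk.2⟩
  exact fun t => (H t).1

section Eseg

variable {R : Type*} [CommRing R]

/-- determinant of the tridiagonal segment of length `t` starting at (1-based) row `i`,
 with diagonal `a` and product-of-offdiagonals `b`. -/
noncomputable def eseg (a b : ℕ → R) (i : ℕ) : ℕ → R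
  | 0 => 1
  | 1 => a i
  | (t+2) => a (i+t+1) * eseg a b i (t+1) - b (i+t) * eseg a b i t

variable (a b : ℕ → R)

lemma eseg_front : ∀ t, ∀ i, eseg a b i (t+2) =
    a i * eseg a b (i+1) (t+1) - b i * eseg a b (i+2) t := by
  refine two_step ?_ ?_ ?_
  · intro i
    show a (i+0+1) * eseg a b i 1 - b (i+0) * eseg a b i 0
       = a i * eseg a b (i+1) 1 - b i * eseg a b (i+2) 0
    simp only [eseg]
    ring_nf
  · intro i
    show a (i+1+1) * eseg a b i 2 - b (i+1) * eseg a b i 1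
       = a i * eseg a b (i+1) 2 - b i * eseg a b (i+2) 1
    simp only [eseg]
    have e1 : i+0+1 = i+1 := by omega
    have e2 : i+1+0+1 = i+2 := by omega
    have e3 : i+1+0 = i+1 := by omega
    have e4 : i + 0 = i := by omega
    rw [e1, e2, e3, e4]
    ring
  · intro t iht iht1 i
    show a (i+(t+2)+1) * eseg a b i (t+3) - b (i+(t+2)) * eseg a b i (t+2)
       = a i * eseg a b (i+1) (t+3) - b i * eseg a b (i+2) (t+2)
    have h1 := iht1 i
    have h2 := iht i
    have e1 : eseg a b (i+1) (t+3) = a ((i+1)+(t+1)+1) * eseg a b (i+1) (t+2)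
        - b ((i+1)+(t+1)) * eseg a b (i+1) (t+1) := rfl
    have e2 : eseg a b (i+2) (t+2) = a ((i+2)+t+1) * eseg a b (i+2) (t+1)
        - b ((i+2)+t) * eseg a b (i+2) t := rfl
    rw [h1, h2, e1, e2]
    have f1 : (i+1)+(t+1)+1 = i+(t+2)+1 := by omega
    have f2 : (i+1)+(t+1) = i+(t+2) := by omega
    have f3 : (i+2)+t+1 = i+(t+2)+1 := by omega
    have f4 : (i+2)+t = i+(t+2) := by omega
    rw [f1, f2, f3, f4]
    ring

lemma eseg_split : ∀ t s i, eseg a b i (s+1+(t+1)) =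
    eseg a b i (s+1) * eseg a b (i+s+1) (t+1)
      - b (i+s) * eseg a b i s * eseg a b (i+s+2) t := by
  refine two_step ?_ ?_ ?_
  · intro s i
    show eseg a b i (s+2) = _
    have e1 : eseg a b i (s+2) = a (i+s+1) * eseg a b i (s+1) - b (i+s) * eseg a b i s := rfl
    rw [e1]
    simp only [eseg]
    ring
  · intro s i
    have e1 : eseg a b i (s+1+2) = a (i+(s+1)+1) * eseg a b i (s+2) - b (i+(s+1)) * eseg a b i (s+1) := rfl
    have e2 : eseg a b i (s+2) = a (i+s+1) * eseg a b i (s+1) - b (i+s) * eseg a b i s := rfl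
    show eseg a b i (s+1+2) = _
    rw [e1, e2]
    have e3 : eseg a b (i+s+1) 2 = a ((i+s+1)+0+1) * eseg a b (i+s+1) 1 - b ((i+s+1)+0) * eseg a b (i+s+1) 0 := rfl
    rw [e3]
    simp only [eseg]
    have f1 : i+s+1+0+1 = i+(s+1)+1 := by omega
    have f2 : i+s+1+0 = i+(s+1) := by omega
    rw [f1, f2]
    ring
  · intro t iht iht1 s i
    have iht' : eseg a b i (s+t+2) = eseg a b i (s+1) * eseg a b (i+s+1) (t+1)
        - b (i+s) * eseg a b i s * eseg a b (i+s+2) t := by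
      rw [show s+t+2 = s+1+(t+1) from by omega]; exact iht s i
    have iht1' : eseg a b i (s+t+2+1) = eseg a b i (s+1) * eseg a b (i+s+1) (t+2)
        - b (i+s) * eseg a b i s * eseg a b (i+s+2) (t+1) := by
      rw [show s+t+2+1 = s+1+(t+2) from by omega]; exact iht1 s i
    rw [show s+1+(t+3) = (s+t+2)+2 from by omega]
    have e1 : eseg a b i ((s+t+2)+2) = a (i+(s+t+2)+1) * eseg a b i (s+t+2+1)
        - b (i+(s+t+2)) * eseg a b i (s+t+2) := rfl
    rw [e1, iht1', iht']
    have e2 : eseg a b (i+s+1) (t+3) = a ((i+s+1)+(t+1)+1) * eseg a b (i+s+1) (t+2) - b ((i+s+1)+(t+1)) * eseg a b (i+s+1) (t+1) := rfl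
    have e3 : eseg a b (i+s+2) (t+2) = a ((i+s+2)+t+1) * eseg a b (i+s+2) (t+1) - b ((i+s+2)+t) * eseg a b (i+s+2) t := rfl
    rw [e2, e3]
    have f1 : (i+s+1)+(t+1)+1 = i+(s+t+2)+1 := by omega
    have f2 : (i+s+1)+(t+1) = i+(s+t+2) := by omega
    have f3 : (i+s+2)+t+1 = i+(s+t+2)+1 := by omega
    have f4 : (i+s+2)+t = i+(s+t+2) := by omega
    rw [f1, f2, f3, f4]
    ring

end Eseg
open Polynomial Finset

section Tri
variable {R : Type*} [CommRing R]

noncomputable def triMat (d u l : ℕ → R) (k : ℕ) : Matrix (Fin k) (Fin k) R :=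
  Matrix.of fun i j =>
    if (i : ℕ) = (j : ℕ) then d ((i : ℕ) + 1)
    else if (i : ℕ) + 1 = (j : ℕ) then u ((i : ℕ) + 1)
    else if (j : ℕ) + 1 = (i : ℕ) then l ((j : ℕ) + 1)
    else 0

lemma triMat_apply (d u l : ℕ → R) (k : ℕ) (i j : Fin k) :
    triMat d u l k i j =
      if (i : ℕ) = (j : ℕ) then d ((i : ℕ) + 1)
      else if (i : ℕ) + 1 = (j : ℕ) then u ((i : ℕ) + 1)
      else if (j : ℕ) + 1 = (i : ℕ) then l ((j : ℕ) + 1)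
      else 0 := rfl

lemma det_triMat (d u l : ℕ → R) :
    ∀ k, (triMat d u l k).det = eseg d (fun j => u j * l j) 1 k := by
  refine two_step ?_ ?_ ?_
  · simp [Matrix.det_fin_zero, eseg]
  · rw [Matrix.det_fin_one]
    show triMat d u l 1 0 0 = d 1
    simp [triMat_apply]
  · intro t ht ht1
    set A := triMat d u l (t+2) with hA
    have hexp := Matrix.det_succ_row A (Fin.last (t+1))
    rw [Fin.sum_univ_castSucc, Fin.sum_univ_castSucc] at hexp
    have hzero : ∀ j : Fin t,
        (-1 : R) ^ ((Fin.last (t+1) : ℕ) + ((j.castSucc.castSucc : Fin (t+2)) : ℕ))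
          * A (Fin.last (t+1)) j.castSucc.castSucc
          * (A.submatrix (Fin.last (t+1)).succAbove (j.castSucc.castSucc).succAbove).det = 0 := by
      intro j
      have hj : ((j.castSucc.castSucc : Fin (t+2)) : ℕ) = (j : ℕ) := rfl
      have : A (Fin.last (t+1)) j.castSucc.castSucc = 0 := by
        rw [hA, triMat_apply]
        have h1 : (Fin.last (t+1) : ℕ) = t+1 := rfl
        rw [h1, hj]
        have hjt : (j : ℕ) < t := j.isLt
        rw [if_neg (by omega), if_neg (by omega), if_neg (by omega)]
      rw [this]; ring
    rw [Finset.sum_eq_zero (fun j _ => hzero j), zero_add] at hexp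
    -- the two remaining terms
    have hlastentry : A (Fin.last (t+1)) (Fin.last (t+1)) = d (t+2) := by
      rw [hA, triMat_apply]; simp
    have hsubentry : A (Fin.last (t+1)) ((Fin.last t).castSucc) = l (t+1) := by
      rw [hA, triMat_apply]
      have h1 : (Fin.last (t+1) : ℕ) = t+1 := rfl
      have h2 : (((Fin.last t).castSucc : Fin (t+2)) : ℕ) = t := rfl
      rw [h1, h2, if_neg (by omega), if_neg (by omega), if_pos rfl]
    -- minor at the last column
    have hminor1 : (A.submatrix (Fin.last (t+1)).succAbove (Fin.last (t+1)).succAbove).det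
        = eseg d (fun j => u j * l j) 1 (t+1) := by
      rw [← ht1]
      congr 1
      ext i j
      rw [Fin.succAbove_last, Matrix.submatrix_apply, hA, triMat_apply, triMat_apply]
      rfl
    -- minor at column t
    have hminor2 : (A.submatrix (Fin.last (t+1)).succAbove
          ((Fin.last t).castSucc : Fin (t+2)).succAbove).det
        = u (t+1) * eseg d (fun j => u j * l j) 1 t := by
      set B := A.submatrix (Fin.last (t+1)).succAbove ((Fin.last t).castSucc : Fin (t+2)).succAbove with hB
      have hexp2 := Matrix.det_succ_column B (Fin.last t)
      rw [Fin.sum_univ_castSucc] at hexp2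
      have hz2 : ∀ i : Fin t,
          (-1 : R) ^ (((i.castSucc : Fin (t+1)) : ℕ) + ((Fin.last t : Fin (t+1)) : ℕ))
            * B i.castSucc (Fin.last t)
            * (B.submatrix (i.castSucc).succAbove (Fin.last t).succAbove).det = 0 := by
        intro i
        have : B i.castSucc (Fin.last t) = 0 := by
          rw [hB, Matrix.submatrix_apply, Fin.succAbove_last, hA, triMat_apply]
          have h1 : ((Fin.castSucc (Fin.castSucc i) : Fin (t+2)) : ℕ) = (i : ℕ) := rfl
          have h2 : ((((Fin.last t).castSucc : Fin (t+2)).succAbove (Fin.last t)) : ℕ) = t+1 := by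
            have : ¬ ((Fin.last t).castSucc < ((Fin.last t).castSucc : Fin (t+2))) := by
              simp [Fin.lt_def]
            rw [Fin.succAbove, if_neg this]
            rfl
          rw [h1, h2]
          have hit : (i : ℕ) < t := i.isLt
          rw [if_neg (by omega), if_neg (by omega), if_neg (by omega)]
        rw [this]; ring
      rw [Finset.sum_eq_zero (fun i _ => hz2 i), zero_add] at hexp2
      have hBentry : B (Fin.last t) (Fin.last t) = u (t+1) := by
        rw [hB, Matrix.submatrix_apply, Fin.succAbove_last, hA, triMat_apply]
        have h1 : ((Fin.castSucc (Fin.last t) : Fin (t+2)) : ℕ) = t := rfl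
        have h2 : ((((Fin.last t).castSucc : Fin (t+2)).succAbove (Fin.last t)) : ℕ) = t+1 := by
          have : ¬ ((Fin.last t).castSucc < ((Fin.last t).castSucc : Fin (t+2))) := by
            simp [Fin.lt_def]
          rw [Fin.succAbove, if_neg this]
          rfl
        rw [h1, h2, if_neg (by omega), if_pos (by omega)]
      have hBminor : (B.submatrix (Fin.last t).succAbove (Fin.last t).succAbove).det
          = eseg d (fun j => u j * l j) 1 t := by
        rw [← ht]
        congr 1
        ext i j
        rw [Matrix.submatrix_apply, Fin.succAbove_last, hB, Matrix.submatrix_apply,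
          Fin.succAbove_last, hA, triMat_apply, triMat_apply]
        have h1 : ((Fin.castSucc (Fin.castSucc i) : Fin (t+2)) : ℕ) = (i : ℕ) := rfl
        have h2 : ((((Fin.last t).castSucc : Fin (t+2)).succAbove (Fin.castSucc j)) : ℕ) = (j : ℕ) := by
          have : (Fin.castSucc (Fin.castSucc j) : Fin (t+2)) < ((Fin.last t).castSucc : Fin (t+2)) := by
            simp only [Fin.lt_def, Fin.coe_castSucc, Fin.val_last]
            exact j.isLt
          rw [Fin.succAbove, if_pos this]
          rfl
        rw [h1, h2]
      rw [hBentry, hBminor] at hexp2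
      have hsign : ((-1 : R) ^ (((Fin.last t : Fin (t+1)) : ℕ) + ((Fin.last t : Fin (t+1)) : ℕ))) = 1 := by
        have : ((Fin.last t : Fin (t+1)) : ℕ) = t := rfl
        rw [this]
        exact Even.neg_one_pow ⟨t, by ring⟩
      rw [hsign] at hexp2
      rw [hexp2]; ring
    rw [hlastentry, hsubentry, hminor1, hminor2] at hexp
    have hs1 : ((-1 : R) ^ ((Fin.last (t+1) : ℕ) + ((Fin.last (t+1) : Fin (t+2)) : ℕ))) = 1 := by
      have h1 : ((Fin.last (t+1) : Fin (t+2)) : ℕ) = t+1 := rfl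
      rw [h1]
      exact Even.neg_one_pow ⟨t+1, by ring⟩
    have hs2 : ((-1 : R) ^ ((Fin.last (t+1) : ℕ) + (((Fin.last t).castSucc : Fin (t+2)) : ℕ))) = -1 := by
      have h1 : ((Fin.last (t+1)) : ℕ) = t+1 := rfl
      have h2 : (((Fin.last t).castSucc : Fin (t+2)) : ℕ) = t := rfl
      rw [h1, h2]
      exact Odd.neg_one_pow ⟨t, by ring⟩
    rw [hs1, hs2] at hexp
    rw [hexp]
    have e1 : eseg d (fun j => u j * l j) 1 (t+2)
        = d (1+t+1) * eseg d (fun j => u j * l j) 1 (t+1)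
          - (u (1+t) * l (1+t)) * eseg d (fun j => u j * l j) 1 t := rfl
    rw [e1, show 1+t+1 = t+2 from by omega, show 1+t = t+1 from by omega]
    ring

end Tri
open Polynomial Finset

lemma chain_strictMonoOn (f : ℕ → ℝ) (k : ℕ)
    (h : ∀ j, 1 ≤ j → j + 1 ≤ k → f j < f (j+1)) : StrictMonoOn f (Set.Icc 1 k) := by
  intro x hx y hy hxy
  have key : ∀ y, x + 1 ≤ y → y ≤ k → f x < f y := by
    intro y hy1
    induction y, hy1 using Nat.le_induction with
    | base => intro h2; exact h x hx.1 h2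
    | succ y hy' ih => intro h2; exact (ih (by omega)).trans (h y (by omega) h2)
  exact key y hxy hy.2

lemma prod_sign_pos (γ : ℕ → ℝ) (k c : ℕ) (x : ℝ) (hck : c ≤ k)
    (hlt : ∀ j ∈ Icc 1 c, γ j < x) (hgt : ∀ j ∈ Icc (c+1) k, x < γ j) :
    0 < (-1:ℝ)^(k-c) * ∏ j ∈ Icc 1 k, (x - γ j) := by
  have hdisj : Disjoint (Icc 1 c) (Icc (c+1) k) := by
    rw [Finset.disjoint_left]; intro a ha hb
    simp only [Finset.mem_Icc] at ha hb; omega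
  have hsplit : Icc 1 k = Icc 1 c ∪ Icc (c+1) k := by
    ext a; simp only [Finset.mem_Icc, Finset.mem_union]; omega
  rw [hsplit, Finset.prod_union hdisj]
  have h1 : 0 < ∏ j ∈ Icc 1 c, (x - γ j) :=
    Finset.prod_pos (fun j hj => by have := hlt j hj; linarith)
  have h2 : ∏ j ∈ Icc (c+1) k, (x - γ j)
      = (-1:ℝ)^(k-c) * ∏ j ∈ Icc (c+1) k, (γ j - x) := by
    have : ∀ j ∈ Icc (c+1) k, (x - γ j) = (-1) * (γ j - x) := by intro j _; ring
    rw [Finset.prod_congr rfl this, Finset.prod_mul_distrib, Finset.prod_const,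
      Nat.card_Icc]
    congr 2
    omega
  have h3 : 0 < ∏ j ∈ Icc (c+1) k, (γ j - x) :=
    Finset.prod_pos (fun j hj => by have := hgt j hj; linarith)
  rw [h2]
  have h4 : (-1:ℝ)^(k-c) * (-1:ℝ)^(k-c) = 1 := by
    rw [← pow_add]; exact Even.neg_one_pow ⟨k-c, rfl⟩
  calc (0:ℝ) < ((∏ j ∈ Icc 1 c, (x - γ j)) * ∏ j ∈ Icc (c+1) k, (γ j - x)) :=
        mul_pos h1 h3
    _ = (-1:ℝ)^(k-c) * ((∏ j ∈ Icc 1 c, (x - γ j)) * ((-1:ℝ)^(k-c) * ∏ j ∈ Icc (c+1) k, (γ j - x))) := by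
        rw [show ∀ A B C : ℝ, C * (A * (C * B)) = (C * C) * (A * B) from by intros; ring, h4]
        ring

lemma poly_root_between (p : ℝ[X]) {x y : ℝ} (hxy : x < y)
    (hsign : eval x p * eval y p < 0) : ∃ z, x < z ∧ z < y ∧ eval z p = 0 := by
  by_cases hx : eval x p < 0
  · have hy : 0 < eval y p := by nlinarith
    obtain ⟨z, hz, hz0⟩ := intermediate_value_Ioo (le_of_lt hxy)
      ((p.continuous).continuousOn) ⟨hx, hy⟩
    exact ⟨z, hz.1, hz.2, hz0⟩
  · push_neg at hx
    have hx' : 0 < eval x p := by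
      rcases lt_or_eq_of_le hx with h | h
      · exact h
      · exfalso; rw [← h] at hsign; simp at hsign
    have hy : eval y p < 0 := by nlinarith
    obtain ⟨z, hz, hz0⟩ := intermediate_value_Ioo' (le_of_lt hxy)
      ((p.continuous).continuousOn) ⟨hy, hx'⟩
    exact ⟨z, hz.1, hz.2, hz0⟩

lemma poly_root_above (p : ℝ[X]) (hp : p.Monic) {x : ℝ} (hx : eval x p < 0) :
    ∃ z, x < z ∧ eval z p = 0 := by
  have hdeg : 0 < p.degree := by
    by_contra h
    push_neg at h
    have h0 : p.natDegree = 0 := Polynomial.natDegree_eq_zero_iff_degree_le_zero.mpr h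
    rw [hp.natDegree_eq_zero.mp h0] at hx
    norm_num at hx
  have ht := Polynomial.tendsto_atTop_of_leadingCoeff_nonneg p hdeg
    (by rw [hp.leadingCoeff]; norm_num)
  obtain ⟨y, hy⟩ := ((ht.eventually_ge_atTop 1).and (Filter.eventually_gt_atTop x)).exists
  obtain ⟨z, hz1, _, hz3⟩ := poly_root_between p hy.2 (by nlinarith [hy.1])
  exact ⟨z, hz1, hz3⟩

lemma poly_root_below (p : ℝ[X]) (hp : p.Monic) {x : ℝ}
    (hx : 0 < (-1:ℝ)^(p.natDegree + 1) * eval x p) :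
    ∃ z, z < x ∧ eval z p = 0 := by
  set d := p.natDegree with hd
  have hd1 : ((-X : ℝ[X])).natDegree = 1 := by
    rw [natDegree_neg, natDegree_X]
  set q := C ((-1:ℝ)^d) * p.comp (-X) with hq
  have hqm : q.Monic := by
    have hcomp : (p.comp (-X)).leadingCoeff = p.leadingCoeff * (-X : ℝ[X]).leadingCoeff ^ d := by
      exact Polynomial.leadingCoeff_comp (by omega)
    have hlX : (-X : ℝ[X]).leadingCoeff = -1 := by
      rw [leadingCoeff_neg, leadingCoeff_X]
    unfold Polynomial.Monic
    rw [hq, leadingCoeff_mul, leadingCoeff_C, hcomp, hlX, hp.leadingCoeff, one_mul,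
      ← pow_add]
    exact Even.neg_one_pow ⟨d, rfl⟩
  have heval : ∀ t, eval t q = (-1:ℝ)^d * eval (-t) p := by
    intro t
    rw [hq, eval_mul, eval_C, eval_comp, eval_neg, eval_X]
  have hneg : eval (-x) q < 0 := by
    rw [heval, neg_neg]
    have hodd : (-1:ℝ)^(d+1) = -((-1:ℝ)^d) := by rw [pow_succ]; ring
    rw [hodd] at hx
    linarith
  obtain ⟨z, hz1, hz2⟩ := poly_root_above q hqm hneg
  refine ⟨-z, by linarith, ?_⟩
  have hthis := heval z
  rw [hz2] at hthis
  have hpow : ((-1:ℝ)^d) ≠ 0 := pow_ne_zero d (by norm_num)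
  rcases mul_eq_zero.mp hthis.symm with h | h
  · exact absurd h hpow
  · exact h

lemma factor_of_roots (p : ℝ[X]) (k : ℕ) (hp : p.Monic) (hdeg : p.natDegree = k)
    (ξ : ℕ → ℝ) (hmono : StrictMonoOn ξ (Set.Icc 1 k))
    (hroots : ∀ j ∈ Icc 1 k, eval (ξ j) p = 0) :
    p = ∏ j ∈ Icc 1 k, (X - C (ξ j)) := by
  classical
  set M : Multiset ℝ := (Icc 1 k).val.map ξ with hM
  have hnodup : M.Nodup := by
    refine Multiset.Nodup.map_on ?_ (Icc 1 k).nodup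
    intro a ha b hb hab
    have ha' : a ∈ Set.Icc 1 k := by simpa using ha
    have hb' : b ∈ Set.Icc 1 k := by simpa using hb
    exact hmono.injOn ha' hb' hab
  have hsub : M ≤ p.roots := by
    rw [Multiset.le_iff_subset hnodup]
    intro a ha
    rw [hM, Multiset.mem_map] at ha
    obtain ⟨j, hj, rfl⟩ := ha
    rw [Polynomial.mem_roots hp.ne_zero]
    exact hroots j hj
  have hcard : Multiset.card M = k := by
    rw [hM, Multiset.card_map]
    simpa using Nat.card_Icc 1 k
  have heq : M = p.roots := by
    refine Multiset.eq_of_le_of_card_le hsub ?_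
    rw [hcard]
    rw [← hdeg]
    exact Polynomial.card_roots' p
  have hsplits : Splits p := by
    rw [Polynomial.splits_iff_card_roots, ← heq, hcard, hdeg]
  have := hsplits.eq_prod_roots_of_monic hp
  rw [← heq, hM, Multiset.map_map] at this
  rw [this, Finset.prod_eq_multiset_prod]
  rfl

lemma sorted_match (n : ℕ) (ξ α : ℕ → ℝ)
    (hξ : StrictMonoOn ξ (Set.Icc 1 n)) (hα : StrictMonoOn α (Set.Icc 1 n))
    (hprod : ∏ j ∈ Icc 1 n, (X - C (ξ j)) = ∏ j ∈ Icc 1 n, (X - C (α j))) :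
    ∀ j ∈ Icc 1 n, ξ j = α j := by
  classical
  have hroots : ((Icc 1 n).val.map ξ) = ((Icc 1 n).val.map α) := by
    have h1 := Polynomial.roots_multiset_prod_X_sub_C ((Icc 1 n).val.map ξ)
    have h2 := Polynomial.roots_multiset_prod_X_sub_C ((Icc 1 n).val.map α)
    rw [Multiset.map_map] at h1 h2
    have e1 : ∏ j ∈ Icc 1 n, (X - C (ξ j)) = (Multiset.map ((fun a => X - C a) ∘ ξ) (Icc 1 n).val).prod := by
      rw [Finset.prod_eq_multiset_prod]; rfl
    have e2 : ∏ j ∈ Icc 1 n, (X - C (α j)) = (Multiset.map ((fun a => X - C a) ∘ α) (Icc 1 n).val).prod := by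
      rw [Finset.prod_eq_multiset_prod]; rfl
    rw [← h1, ← h2, ← e1, ← e2, hprod]
  -- convert to lists
  have hval : (Icc 1 n).val = (↑(List.range' 1 n) : Multiset ℕ) := by
    rw [Nat.Icc_eq_range']
    norm_num
  rw [hval] at hroots
  have hlist : ((List.range' 1 n).map ξ : Multiset ℝ) = ((List.range' 1 n).map α : Multiset ℝ) := by
    simpa using hroots
  rw [Multiset.coe_eq_coe] at hlist
  have hsortξ : List.Pairwise (· < ·) ((List.range' 1 n).map ξ) := by
    rw [List.pairwise_map]
    refine List.Pairwise.imp_of_mem ?_ (List.pairwise_lt_range' (s := 1) (n := n))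
    intro a b ha hb hab
    rw [List.mem_range'_1] at ha hb
    exact hξ ⟨ha.1, by omega⟩ ⟨hb.1, by omega⟩ hab
  have hsortα : List.Pairwise (· < ·) ((List.range' 1 n).map α) := by
    rw [List.pairwise_map]
    refine List.Pairwise.imp_of_mem ?_ (List.pairwise_lt_range' (s := 1) (n := n))
    intro a b ha hb hab
    rw [List.mem_range'_1] at ha hb
    exact hα ⟨ha.1, by omega⟩ ⟨hb.1, by omega⟩ hab
  have heq := hlist.eq_of_pairwise (fun a b _ _ h1 h2 => absurd (h1.trans h2) (lt_irrefl _)) hsortξ hsortα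
  intro j hj
  rw [Finset.mem_Icc] at hj
  have hjl : j - 1 < (List.range' 1 n).length := by rw [List.length_range']; omega
  have e : (List.map ξ (List.range' 1 n))[j-1]? = (List.map α (List.range' 1 n))[j-1]? := by
    rw [heq]
  have h3 : (List.range' 1 n)[j-1]? = some j := by
    rw [List.getElem?_eq_getElem hjl, List.getElem_range']
    congr 1
    omega
  rw [List.getElem?_map, List.getElem?_map, h3] at e
  simpa using e
open Polynomial Finset

section PP
variable (q r : ℕ → ℝ)

noncomputable def aP : ℕ → ℝ[X] := fun j => (X : ℝ[X]) - C (q j)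
noncomputable def bP : ℕ → ℝ[X] := fun j => (C (r j))^2
noncomputable def PP (k : ℕ) : ℝ[X] := eseg (aP q) (bP r) 1 k

lemma PP_zero : PP q r 0 = 1 := rfl
lemma PP_one : PP q r 1 = X - C (q 1) := rfl
lemma PP_rec (t : ℕ) : PP q r (t+2)
    = (X - C (q (t+2))) * PP q r (t+1) - C (r (t+1))^2 * PP q r t := by
  show aP q (1+t+1) * eseg (aP q) (bP r) 1 (t+1) - bP r (1+t) * eseg (aP q) (bP r) 1 t = _
  rw [show 1+t+1 = t+2 from by omega, show 1+t = t+1 from by omega]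
  rfl

lemma bP_natDegree (j : ℕ) : (C (r j)^2 : ℝ[X]).natDegree = 0 := by
  rw [← C_pow, natDegree_C]

lemma PP_monic : ∀ k, (PP q r k).Monic ∧ (PP q r k).natDegree = k := by
  refine two_step ?_ ?_ ?_
  · exact ⟨monic_one, natDegree_one⟩
  · exact ⟨monic_X_sub_C _, natDegree_X_sub_C _⟩
  · intro t ⟨hm0, hd0⟩ ⟨hm1, hd1⟩
    rw [PP_rec]
    set p := (X - C (q (t+2))) * PP q r (t+1) with hp
    set w := C (r (t+1))^2 * PP q r t with hw
    have hpm : p.Monic := (monic_X_sub_C _).mul hm1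
    have hpd : p.natDegree = t+2 := by
      rw [hp, natDegree_mul (X_sub_C_ne_zero _) hm1.ne_zero, natDegree_X_sub_C, hd1]
      omega
    have hwd : w.natDegree ≤ t := by
      refine le_trans natDegree_mul_le ?_
      rw [bP_natDegree, hd0]
      omega
    have hdlt : w.degree < p.degree := by
      calc w.degree ≤ (w.natDegree : WithBot ℕ) := degree_le_natDegree
        _ ≤ (t : WithBot ℕ) := by exact_mod_cast hwd
        _ < ((t+2 : ℕ) : WithBot ℕ) := by exact_mod_cast (by omega : t < t+2)
        _ = p.degree := by rw [degree_eq_natDegree hpm.ne_zero, hpd]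
    refine ⟨hpm.sub_of_left hdlt, ?_⟩
    rw [natDegree_eq_of_degree_eq (degree_sub_eq_left_of_degree_lt hdlt), hpd]

lemma PP_coeff_top (k : ℕ) : (PP q r k).coeff k = 1 := by
  have h := PP_monic q r k
  have := h.1.coeff_natDegree
  rwa [h.2] at this

lemma PP_coeff_next : ∀ k, (PP q r (k+1)).coeff k = -(∑ j ∈ Icc 1 (k+1), q j) := by
  have step : ∀ k, (PP q r (k+1)).coeff k = -(∑ j ∈ Icc 1 (k+1), q j) →
      (PP q r (k+2)).coeff (k+1) = -(∑ j ∈ Icc 1 (k+2), q j) := by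
    intro k ih
    rw [PP_rec, coeff_sub, sub_mul, coeff_sub, coeff_X_mul, coeff_C_mul]
    have h1 : (PP q r (k+1)).coeff (k+1) = 1 := PP_coeff_top q r (k+1)
    have h2 : (C (r (k+1))^2 * PP q r k).coeff (k+1) = 0 := by
      refine coeff_eq_zero_of_natDegree_lt ?_
      refine lt_of_le_of_lt natDegree_mul_le ?_
      rw [bP_natDegree, (PP_monic q r k).2]
      omega
    rw [h1, h2, ih, Finset.sum_Icc_succ_top (by omega : 1 ≤ k+2)]
    ring
  refine two_step ?_ ?_ (fun t ih0 ih1 => step (t+1) ih1)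
  · rw [PP_one]
    simp
  · exact step 0 (by rw [PP_one]; simp)

end PP

section Reflect
variable (q r : ℕ → ℝ) (m : ℕ)

lemma eseg_reflect
    (hq : ∀ i j, 1 ≤ i → 1 ≤ j → i + j = 2*m+1 → q i = q j)
    (hr : ∀ i j, 1 ≤ i → 1 ≤ j → i + j = 2*m → r i = r j) :
    ∀ t s k, 1 ≤ s → 1 ≤ k → s + t + k = m + 2 →
      eseg (aP q) (bP r) (m+s) t = eseg (aP q) (bP r) k t := by
  refine two_step ?_ ?_ ?_
  · intro s k _ _ _; rfl
  · intro s k hs hk hsum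
    show aP q (m+s) = aP q k
    unfold aP
    rw [hq (m+s) k (by omega) hk (by omega)]
  · intro t iht iht1 s k hs hk hsum
    have e1 : eseg (aP q) (bP r) (m+s) (t+2)
        = aP q ((m+s)+t+1) * eseg (aP q) (bP r) (m+s) (t+1)
          - bP r ((m+s)+t) * eseg (aP q) (bP r) (m+s) t := rfl
    rw [e1, eseg_front (aP q) (bP r) t k]
    have hql : aP q ((m+s)+t+1) = aP q k := by
      unfold aP; rw [hq ((m+s)+t+1) k (by omega) hk (by omega)]
    have hrl : bP r ((m+s)+t) = bP r k := by
      unfold bP; rw [hr ((m+s)+t) k (by omega) hk (by omega)]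
    rw [hql, hrl, iht1 s (k+1) hs (by omega) (by omega), iht s (k+2) hs (by omega) (by omega)]

lemma PP_split (hm : 1 ≤ m)
    (hq : ∀ i j, 1 ≤ i → 1 ≤ j → i + j = 2*m+1 → q i = q j)
    (hr : ∀ i j, 1 ≤ i → 1 ≤ j → i + j = 2*m → r i = r j) :
    PP q r (2*m) = (PP q r m - C (r m) * PP q r (m-1)) * (PP q r m + C (r m) * PP q r (m-1)) := by
  obtain ⟨m', rfl⟩ : ∃ m', m = m'+1 := ⟨m-1, by omega⟩
  set m := m'+1
  have hsp := eseg_split (aP q) (bP r) m' m' 1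
  have e0 : m'+1+(m'+1) = 2*m := by omega
  have e1 : 1+m'+1 = m+1 := by omega
  have e2 : 1+m'+2 = m+2 := by omega
  have e3 : 1+m' = m := by omega
  rw [e0, e1, e2, e3] at hsp
  have hrefl1 : eseg (aP q) (bP r) (m+1) (m'+1) = eseg (aP q) (bP r) 1 (m'+1) := by
    exact eseg_reflect q r m hq hr (m'+1) 1 1 (by omega) (by omega) (by omega)
  have hrefl2 : eseg (aP q) (bP r) (m+2) m' = eseg (aP q) (bP r) 1 m' := by
    exact eseg_reflect q r m hq hr m' 2 1 (by omega) (by omega) (by omega)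
  rw [hrefl1, hrefl2] at hsp
  show eseg (aP q) (bP r) 1 (2*m) = _
  rw [hsp]
  show PP q r m * PP q r m - bP r m * PP q r m' * PP q r m' = _
  unfold bP
  have : m - 1 = m' := by omega
  rw [this]
  ring

end Reflect

section CharPoly

lemma charpoly_pathHamiltonian (n : ℕ) (q r : ℕ → ℝ) :
    (pathHamiltonian n q r).charpoly = PP q r n := by
  have hmat : charmatrix (pathHamiltonian n q r)
      = triMat (fun j => (X:ℝ[X]) - C (q j)) (fun j => -C (r j)) (fun j => -C (r j)) n := by
    ext i j
    by_cases hij : i = j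
    · subst hij
      rw [Matrix.charmatrix_apply_eq, triMat_apply, if_pos rfl]
      have : pathHamiltonian n q r i i = q ((i:ℕ)+1) := by
        show (if (i : ℕ) = (i : ℕ) then q ((i : ℕ) + 1) else _) = _
        rw [if_pos rfl]
      rw [this]
    · have hij' : (i : ℕ) ≠ (j : ℕ) := fun h => hij (Fin.ext h)
      rw [Matrix.charmatrix_apply_ne _ _ _ hij, triMat_apply, if_neg hij']
      have hexp : pathHamiltonian n q r i j =
          (if (i : ℕ) + 1 = (j : ℕ) then r ((i : ℕ) + 1)
           else if (j : ℕ) + 1 = (i : ℕ) then r ((j : ℕ) + 1) else 0) := by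
        show (if (i : ℕ) = (j : ℕ) then q ((i : ℕ) + 1) else _) = _
        rw [if_neg hij']
      rw [hexp]
      by_cases h1 : (i : ℕ) + 1 = (j : ℕ)
      · rw [if_pos h1, if_pos h1]
      · rw [if_neg h1, if_neg h1]
        by_cases h2 : (j : ℕ) + 1 = (i : ℕ)
        · rw [if_pos h2, if_pos h2]
        · rw [if_neg h2, if_neg h2, map_zero, neg_zero]
  rw [Matrix.charpoly, hmat, det_triMat]
  show eseg _ (fun j => (-C (r j)) * (-C (r j))) 1 n = eseg (aP q) (bP r) 1 n
  congr 1
  · funext j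
    show (-C (r j)) * (-C (r j)) = (C (r j))^2
    ring

end CharPoly

section ProdCoeff
variable (γ : ℕ → ℝ)

lemma prodXC_monic (k : ℕ) : (∏ j ∈ Icc 1 k, (X - C (γ j))).Monic :=
  monic_prod_of_monic _ _ (fun j _ => monic_X_sub_C _)

lemma prodXC_natDegree (k : ℕ) : (∏ j ∈ Icc 1 k, (X - C (γ j))).natDegree = k := by
  rw [natDegree_prod _ _ (fun j _ => X_sub_C_ne_zero _)]
  have : ∀ j ∈ Icc 1 k, (X - C (γ j)).natDegree = 1 := fun j _ => natDegree_X_sub_C _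
  rw [Finset.sum_congr rfl this, Finset.sum_const, Nat.card_Icc, smul_eq_mul]
  omega

lemma prodXC_coeff_sum : ∀ k, (∏ j ∈ Icc 1 (k+1), (X - C (γ j))).coeff k
    = -(∑ j ∈ Icc 1 (k+1), γ j) := by
  intro k
  induction k with
  | zero =>
    rw [show (0+1) = 1 from rfl, Finset.Icc_self, Finset.prod_singleton, Finset.sum_singleton]
    simp
  | succ k ih =>
    rw [Finset.prod_Icc_succ_top (by omega : 1 ≤ k+2), Finset.sum_Icc_succ_top (by omega : 1 ≤ k+2),
      mul_comm, sub_mul, coeff_sub, coeff_X_mul, coeff_C_mul, ih]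
    have htop : (∏ j ∈ Icc 1 (k+1), (X - C (γ j))).coeff (k+1) = 1 := by
      have h := (prodXC_monic γ (k+1)).coeff_natDegree
      rwa [prodXC_natDegree] at h
    rw [htop]
    ring

lemma prodXC_coeff_e2 : ∀ k, 2 * (∏ j ∈ Icc 1 (k+2), (X - C (γ j))).coeff k
    = (∑ j ∈ Icc 1 (k+2), γ j)^2 - (∑ j ∈ Icc 1 (k+2), (γ j)^2) := by
  intro k
  induction k with
  | zero =>
    rw [Finset.prod_Icc_succ_top (by omega : (1:ℕ) ≤ 2), Finset.sum_Icc_succ_top (by omega : (1:ℕ) ≤ 2),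
      Finset.sum_Icc_succ_top (by omega : (1:ℕ) ≤ 2), Finset.Icc_self, Finset.prod_singleton,
      Finset.sum_singleton, Finset.sum_singleton]
    rw [coeff_zero_eq_eval_zero]
    simp only [eval_mul, eval_sub, eval_X, eval_C]
    ring
  | succ k ih =>
    rw [Finset.prod_Icc_succ_top (by omega : 1 ≤ k+3), Finset.sum_Icc_succ_top (by omega : 1 ≤ k+3),
      Finset.sum_Icc_succ_top (a := 1) (b := k+2) (f := fun j => (γ j)^2) (by omega : 1 ≤ k+3),
      mul_comm (∏ j ∈ Icc 1 (k+2), (X - C (γ j))) (X - C (γ (k+2+1))), sub_mul, coeff_sub,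
      coeff_X_mul, coeff_C_mul, mul_sub, ih,
      prodXC_coeff_sum γ (k+1)]
    ring

lemma eval_prodXC (k : ℕ) (x : ℝ) :
    eval x (∏ j ∈ Icc 1 k, (X - C (γ j))) = ∏ j ∈ Icc 1 k, (x - γ j) := by
  rw [eval_prod]
  exact Finset.prod_congr rfl (fun j _ => by simp)

lemma eval_prodXC_root (k : ℕ) (j : ℕ) (hj : j ∈ Icc 1 k) :
    eval (γ j) (∏ i ∈ Icc 1 k, (X - C (γ i))) = 0 := by
  rw [eval_prodXC]
  exact Finset.prod_eq_zero hj (by ring)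

end ProdCoeff

lemma neg_one_pow_succ_succ (e : ℕ) : (-1:ℝ)^(e+2) = (-1:ℝ)^e := by
  rw [pow_succ, pow_succ]; ring

lemma neg_one_sq_pow (e : ℕ) : (-1:ℝ)^e * (-1:ℝ)^e = 1 := by
  rw [← pow_add]; exact Even.neg_one_pow ⟨e, rfl⟩

lemma opp_sign_mul {e : ℕ} {A B : ℝ} (hA : 0 < (-1:ℝ)^(e+1) * A) (hB : 0 < (-1:ℝ)^e * B) :
    A * B < 0 := by
  have h := mul_pos hA hB
  have he : (-1:ℝ)^(e+1) * A * ((-1:ℝ)^e * B) = ((-1:ℝ)^e * (-1:ℝ)^e) * (-(A * B)) := by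
    rw [pow_succ]; ring
  rw [he, neg_one_sq_pow, one_mul] at h
  linarith

section Interlace
variable (q r : ℕ → ℝ) (m : ℕ)

lemma PP_interlace (hrpos : ∀ j, 1 ≤ j → j ≤ m → 0 < r j) :
    ∀ k1, k1 + 1 ≤ m →
    ∃ μ ν : ℕ → ℝ,
      PP q r k1 = ∏ j ∈ Icc 1 k1, (X - C (μ j)) ∧
      PP q r (k1+1) = ∏ j ∈ Icc 1 (k1+1), (X - C (ν j)) ∧
      (∀ j ∈ Icc 1 k1, ν j < μ j ∧ μ j < ν (j+1)) := by
  intro k1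
  induction k1 with
  | zero =>
    intro _
    refine ⟨fun _ => 0, fun _ => q 1, by simp [PP_zero], ?_, by simp⟩
    rw [PP_one, Finset.Icc_self, Finset.prod_singleton]
  | succ K ih =>
    intro hK2
    obtain ⟨μ, ν, hμ, hν, hint⟩ := ih (by omega)
    -- strict monotonicity of ν on Icc 1 (K+1)
    have hνmono : StrictMonoOn ν (Set.Icc 1 (K+1)) := by
      refine chain_strictMonoOn ν (K+1) (fun j hj1 hj2 => ?_)
      have h := hint j (Finset.mem_Icc.mpr ⟨hj1, by omega⟩)
      linarith [h.1, h.2]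
    set F := PP q r (K+2) with hF
    have hFm : F.Monic := (PP_monic q r (K+2)).1
    have hFd : F.natDegree = K+2 := (PP_monic q r (K+2)).2
    have hrK : 0 < r (K+1) := hrpos (K+1) (by omega) (by omega)
    -- sign of eval of F at the points ν j
    have signF : ∀ j ∈ Icc 1 (K+1), 0 < (-1:ℝ)^(K+2-j) * eval (ν j) F := by
      intro j hj
      rw [Finset.mem_Icc] at hj
      have hz : eval (ν j) (PP q r (K+1)) = 0 := by
        rw [hν]; exact eval_prodXC_root ν (K+1) j (Finset.mem_Icc.mpr hj)
      have hev : eval (ν j) F = -(r (K+1))^2 * eval (ν j) (PP q r K) := by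
        rw [hF, PP_rec, eval_sub, eval_mul, eval_mul, hz, eval_pow, eval_C]
        ring
      have hevK : eval (ν j) (PP q r K) = ∏ i ∈ Icc 1 K, (ν j - μ i) := by
        rw [hμ, eval_prodXC]
      have hprod : 0 < (-1:ℝ)^(K - (j-1)) * ∏ i ∈ Icc 1 K, (ν j - μ i) := by
        refine prod_sign_pos μ K (j-1) (ν j) (by omega) ?_ ?_
        · intro i hi
          rw [Finset.mem_Icc] at hi
          have h1 := (hint i (Finset.mem_Icc.mpr ⟨hi.1, by omega⟩)).2
          rcases eq_or_lt_of_le (show i+1 ≤ j from by omega) with h | h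
          · rw [h] at h1; exact h1
          · exact h1.trans (hνmono ⟨by omega, by omega⟩ ⟨by omega, by omega⟩ h)
        · intro i hi
          rw [Finset.mem_Icc] at hi
          have h1 := (hint i (Finset.mem_Icc.mpr ⟨by omega, hi.2⟩)).1
          rcases eq_or_lt_of_le (show j ≤ i from by omega) with h | h
          · rw [h]; exact h1
          · exact (hνmono ⟨by omega, by omega⟩ ⟨by omega, by omega⟩ h).trans h1
      have he : K + 2 - j = (K - (j-1)) + 1 := by omega
      rw [he, hev, hevK, pow_succ]
      have hr2 : 0 < (r (K+1))^2 := by positivity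
      calc (0:ℝ) < (r (K+1))^2 * ((-1:ℝ)^(K-(j-1)) * ∏ i ∈ Icc 1 K, (ν j - μ i)) :=
            mul_pos hr2 hprod
        _ = (-1:ℝ)^(K-(j-1)) * -1 * (-(r (K+1))^2 * ∏ i ∈ Icc 1 K, (ν j - μ i)) := by ring
    -- existence of the K+2 roots of F
    have hex : ∀ j, ∃ x, j ∈ Icc 1 (K+2) →
        eval x F = 0 ∧ (2 ≤ j → ν (j-1) < x) ∧ (j ≤ K+1 → x < ν j) := by
      intro j
      by_cases hj : j ∈ Icc 1 (K+2)
      · rw [Finset.mem_Icc] at hj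
        by_cases hj1 : j = 1
        · -- root below ν 1
          subst hj1
          have hs := signF 1 (Finset.mem_Icc.mpr ⟨le_refl 1, by omega⟩)
          have hs' : 0 < (-1:ℝ)^(F.natDegree+1) * eval (ν 1) F := by
            rw [hFd]
            have : (-1:ℝ)^(K+2+1) = (-1:ℝ)^(K+2-1) := by
              rw [show K+2+1 = (K+1)+2 from by omega, neg_one_pow_succ_succ,
                show K+2-1 = K+1 from by omega]
            rwa [this]
          obtain ⟨z, hz1, hz2⟩ := poly_root_below F hFm hs'
          exact ⟨z, fun _ => ⟨hz2, fun h2 => by omega, fun _ => hz1⟩⟩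
        · by_cases hjtop : j = K+2
          · -- root above ν (K+1)
            subst hjtop
            have hs := signF (K+1) (Finset.mem_Icc.mpr ⟨by omega, le_refl _⟩)
            have : eval (ν (K+1)) F < 0 := by
              rw [show K+2-(K+1) = 1 from by omega, pow_one] at hs
              linarith
            obtain ⟨z, hz1, hz2⟩ := poly_root_above F hFm this
            refine ⟨z, fun _ => ⟨hz2, fun _ => ?_, fun h => by omega⟩⟩
            rwa [show K+2-1 = K+1 from by omega]
          · -- interior root between ν (j-1) and ν j
            have hj2 : 2 ≤ j := by omega
            have hjK : j ≤ K+1 := by omega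
            have hA := signF (j-1) (Finset.mem_Icc.mpr ⟨by omega, by omega⟩)
            have hB := signF j (Finset.mem_Icc.mpr ⟨by omega, hjK⟩)
            have hAe : K+2-(j-1) = (K+1-j)+2 := by omega
            have hBe : K+2-j = (K+1-j)+1 := by omega
            rw [hAe, neg_one_pow_succ_succ] at hA
            rw [hBe] at hB
            have hmul : eval (ν j) F * eval (ν (j-1)) F < 0 := opp_sign_mul hB hA
            have hlt : ν (j-1) < ν j :=
              hνmono ⟨by omega, by omega⟩ ⟨by omega, by omega⟩ (by omega)
            obtain ⟨z, hz1, hz2, hz3⟩ := poly_root_between F hlt (by nlinarith)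
            exact ⟨z, fun _ => ⟨hz3, fun _ => hz1, fun _ => hz2⟩⟩
      · exact ⟨0, fun h => absurd h hj⟩
    choose ξ hξ using hex
    have hroot : ∀ j ∈ Icc 1 (K+2), eval (ξ j) F = 0 := fun j hj => (hξ j hj).1
    have hlow : ∀ j ∈ Icc 1 (K+1), ξ j < ν j := by
      intro j hj
      rw [Finset.mem_Icc] at hj
      exact ((hξ j (Finset.mem_Icc.mpr ⟨hj.1, by omega⟩)).2.2) hj.2
    have hhigh : ∀ j ∈ Icc 1 (K+1), ν j < ξ (j+1) := by
      intro j hj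
      rw [Finset.mem_Icc] at hj
      have h := ((hξ (j+1) (Finset.mem_Icc.mpr ⟨by omega, by omega⟩)).2.1) (by omega)
      rwa [show j+1-1 = j from by omega] at h
    have hξmono : StrictMonoOn ξ (Set.Icc 1 (K+2)) := by
      refine chain_strictMonoOn ξ (K+2) (fun j hj1 hj2 => ?_)
      have h1 := hlow j (Finset.mem_Icc.mpr ⟨hj1, by omega⟩)
      have h2 := hhigh j (Finset.mem_Icc.mpr ⟨hj1, by omega⟩)
      linarith
    refine ⟨ν, ξ, hν, factor_of_roots F (K+2) hFm hFd ξ hξmono hroot, ?_⟩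
    intro j hj
    exact ⟨hlow j hj, hhigh j hj⟩

end Interlace

section FinalStage
variable (q r : ℕ → ℝ) (m : ℕ)

lemma final_stage (hm : 1 ≤ m) (hrpos : ∀ j, 1 ≤ j → j ≤ m → 0 < r j) :
    ∃ β γ : ℕ → ℝ,
      (PP q r m - C (r m) * PP q r (m-1)) = ∏ j ∈ Icc 1 m, (X - C (γ j)) ∧
      (PP q r m + C (r m) * PP q r (m-1)) = ∏ j ∈ Icc 1 m, (X - C (β j)) ∧
      (∀ j ∈ Icc 1 m, β j < γ j) ∧ (∀ j ∈ Icc 1 (m-1), γ j < β (j+1)) := by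
  obtain ⟨M, rfl⟩ : ∃ M, m = M+1 := ⟨m-1, by omega⟩
  set m := M+1 with hmdef
  have hMm : m - 1 = M := by omega
  rw [hMm]
  obtain ⟨μ, ν, hμ, hν, hint⟩ := PP_interlace q r m hrpos M (by omega)
  have hνmono : StrictMonoOn ν (Set.Icc 1 m) := by
    refine chain_strictMonoOn ν m (fun j hj1 hj2 => ?_)
    have h := hint j (Finset.mem_Icc.mpr ⟨hj1, by omega⟩)
    linarith [h.1, h.2]
  have hrm : 0 < r m := hrpos m (by omega) (by omega)
  set pp := PP q r m - C (r m) * PP q r M with hpp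
  set pm := PP q r m + C (r m) * PP q r M with hpm
  have hdegC : (C (r m) * PP q r M).degree < (PP q r m).degree := by
    calc (C (r m) * PP q r M).degree ≤ ((C (r m) * PP q r M).natDegree : WithBot ℕ) :=
          degree_le_natDegree
      _ ≤ (M : WithBot ℕ) := by
          exact_mod_cast le_trans natDegree_mul_le (by rw [natDegree_C, (PP_monic q r M).2]; omega)
      _ < ((m : ℕ) : WithBot ℕ) := by exact_mod_cast (by omega : M < m)
      _ = (PP q r m).degree := by
          rw [degree_eq_natDegree (PP_monic q r m).1.ne_zero, (PP_monic q r m).2]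
  have hppm : pp.Monic := (PP_monic q r m).1.sub_of_left hdegC
  have hppd : pp.natDegree = m := by
    rw [hpp, natDegree_eq_of_degree_eq (degree_sub_eq_left_of_degree_lt hdegC),
      (PP_monic q r m).2]
  have hpmm : pm.Monic := by
    refine (PP_monic q r m).1.add_of_left ?_
    exact hdegC
  have hpmd : pm.natDegree = m := by
    have : pm = PP q r m - (-(C (r m) * PP q r M)) := by rw [hpm]; ring
    rw [this, natDegree_eq_of_degree_eq (degree_sub_eq_left_of_degree_lt (by rwa [degree_neg])),
      (PP_monic q r m).2]
  -- evaluation at the ν points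
  have hevν : ∀ j ∈ Icc 1 m, eval (ν j) (PP q r m) = 0 := by
    intro j hj
    rw [hν]; exact eval_prodXC_root ν m j hj
  have hprodν : ∀ j ∈ Icc 1 m, 0 < (-1:ℝ)^(m-j) * eval (ν j) (PP q r M) := by
    intro j hj
    rw [Finset.mem_Icc] at hj
    have hevK : eval (ν j) (PP q r M) = ∏ i ∈ Icc 1 M, (ν j - μ i) := by
      rw [hμ, eval_prodXC]
    have h := prod_sign_pos μ M (j-1) (ν j) (by omega) ?_ ?_
    · rw [hevK, show m - j = M - (j-1) from by omega]
      exact h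
    · intro i hi
      rw [Finset.mem_Icc] at hi
      have h1 := (hint i (Finset.mem_Icc.mpr ⟨hi.1, by omega⟩)).2
      rcases eq_or_lt_of_le (show i+1 ≤ j from by omega) with h | h
      · rw [h] at h1; exact h1
      · exact h1.trans (hνmono ⟨by omega, by omega⟩ ⟨by omega, by omega⟩ h)
    · intro i hi
      rw [Finset.mem_Icc] at hi
      have h1 := (hint i (Finset.mem_Icc.mpr ⟨by omega, hi.2⟩)).1
      rcases eq_or_lt_of_le (show j ≤ i from by omega) with h | h
      · rw [h]; exact h1
      · exact (hνmono ⟨by omega, by omega⟩ ⟨by omega, by omega⟩ h).trans h1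
  have hsignνp : ∀ j ∈ Icc 1 m, 0 < (-1:ℝ)^(m-j+1) * eval (ν j) pp := by
    intro j hj
    have h1 := hprodν j hj
    have h2 : eval (ν j) pp = -(r m) * eval (ν j) (PP q r M) := by
      rw [hpp, eval_sub, eval_mul, eval_C, hevν j hj]; ring
    rw [h2, pow_succ]
    calc (0:ℝ) < r m * ((-1:ℝ)^(m-j) * eval (ν j) (PP q r M)) := mul_pos hrm h1
      _ = (-1:ℝ)^(m-j) * -1 * (-(r m) * eval (ν j) (PP q r M)) := by ring
  have hsignνm : ∀ j ∈ Icc 1 m, 0 < (-1:ℝ)^(m-j) * eval (ν j) pm := by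
    intro j hj
    have h1 := hprodν j hj
    have h2 : eval (ν j) pm = (r m) * eval (ν j) (PP q r M) := by
      rw [hpm, eval_add, eval_mul, eval_C, hevν j hj]; ring
    rw [h2]
    calc (0:ℝ) < r m * ((-1:ℝ)^(m-j) * eval (ν j) (PP q r M)) := mul_pos hrm h1
      _ = (-1:ℝ)^(m-j) * (r m * eval (ν j) (PP q r M)) := by ring
  -- evaluation at the μ points
  have hsignμ : ∀ j ∈ Icc 1 M, 0 < (-1:ℝ)^(m-j) * eval (μ j) (PP q r m) := by
    intro j hj
    rw [Finset.mem_Icc] at hj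
    have hevK : eval (μ j) (PP q r m) = ∏ i ∈ Icc 1 m, (μ j - ν i) := by
      rw [hν, eval_prodXC]
    have h := prod_sign_pos ν m j (μ j) (by omega) ?_ ?_
    · rw [hevK]; exact h
    · intro i hi
      rw [Finset.mem_Icc] at hi
      have h1 := (hint j (Finset.mem_Icc.mpr ⟨by omega, by omega⟩)).1
      rcases eq_or_lt_of_le (show i ≤ j from by omega) with h | h
      · rw [h]; exact h1
      · exact lt_trans (hνmono ⟨by omega, by omega⟩ ⟨by omega, by omega⟩ h) h1
    · intro i hi
      rw [Finset.mem_Icc] at hi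
      have h1 := (hint j (Finset.mem_Icc.mpr ⟨by omega, by omega⟩)).2
      rcases eq_or_lt_of_le (show j+1 ≤ i from by omega) with h | h
      · rw [h] at h1; exact h1
      · exact h1.trans (hνmono ⟨by omega, by omega⟩ ⟨by omega, by omega⟩ h)
  have hevμp : ∀ j ∈ Icc 1 M, eval (μ j) pp = eval (μ j) (PP q r m) := by
    intro j hj
    have : eval (μ j) (PP q r M) = 0 := by
      rw [hμ]; exact eval_prodXC_root μ M j hj
    rw [hpp, eval_sub, eval_mul, eval_C, this]; ring
  have hevμm : ∀ j ∈ Icc 1 M, eval (μ j) pm = eval (μ j) (PP q r m) := by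
    intro j hj
    have : eval (μ j) (PP q r M) = 0 := by
      rw [hμ]; exact eval_prodXC_root μ M j hj
    rw [hpm, eval_add, eval_mul, eval_C, this]; ring
  -- construct γ : roots of pp
  have hexγ : ∀ j, ∃ x, j ∈ Icc 1 m →
      eval x pp = 0 ∧ ν j < x ∧ (j ≤ M → x < μ j) := by
    intro j
    by_cases hj : j ∈ Icc 1 m
    · rw [Finset.mem_Icc] at hj
      by_cases hjM : j ≤ M
      · -- root in (ν j, μ j)
        have hA := hsignνp j (Finset.mem_Icc.mpr hj)
        have hB := hsignμ j (Finset.mem_Icc.mpr ⟨hj.1, hjM⟩)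
        rw [← hevμp j (Finset.mem_Icc.mpr ⟨hj.1, hjM⟩)] at hB
        have hmul : eval (ν j) pp * eval (μ j) pp < 0 := opp_sign_mul hA hB
        have hlt : ν j < μ j := (hint j (Finset.mem_Icc.mpr ⟨hj.1, hjM⟩)).1
        obtain ⟨z, hz1, hz2, hz3⟩ := poly_root_between pp hlt hmul
        exact ⟨z, fun _ => ⟨hz3, hz1, fun _ => hz2⟩⟩
      · -- j = m : root above ν m
        have hA := hsignνp j (Finset.mem_Icc.mpr hj)
        rw [show m - j + 1 = 1 from by omega, pow_one] at hA
        obtain ⟨z, hz1, hz2⟩ := poly_root_above pp hppm (by linarith)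
        exact ⟨z, fun _ => ⟨hz2, hz1, fun h => by omega⟩⟩
    · exact ⟨0, fun h => absurd h hj⟩
  -- construct β : roots of pm
  have hexβ : ∀ j, ∃ x, j ∈ Icc 1 m →
      eval x pm = 0 ∧ x < ν j ∧ (2 ≤ j → μ (j-1) < x) := by
    intro j
    by_cases hj : j ∈ Icc 1 m
    · rw [Finset.mem_Icc] at hj
      by_cases hj1 : j = 1
      · subst hj1
        have hB := hsignνm 1 (Finset.mem_Icc.mpr hj)
        have hs' : 0 < (-1:ℝ)^(pm.natDegree+1) * eval (ν 1) pm := by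
          rw [hpmd, show m+1 = (m-1)+2 from by omega, neg_one_pow_succ_succ,
            show m-1 = m-1 from rfl]
          exact hB
        obtain ⟨z, hz1, hz2⟩ := poly_root_below pm hpmm hs'
        exact ⟨z, fun _ => ⟨hz2, hz1, fun h2 => by omega⟩⟩
      · -- root in (μ (j-1), ν j)
        have hA := hsignμ (j-1) (Finset.mem_Icc.mpr ⟨by omega, by omega⟩)
        rw [← hevμm (j-1) (Finset.mem_Icc.mpr ⟨by omega, by omega⟩)] at hA
        have hB := hsignνm j (Finset.mem_Icc.mpr hj)
        rw [show m - (j-1) = (m-j)+1 from by omega] at hA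
        have hmul : eval (μ (j-1)) pm * eval (ν j) pm < 0 := opp_sign_mul hA hB
        have hlt : μ (j-1) < ν j := by
          have h := (hint (j-1) (Finset.mem_Icc.mpr ⟨by omega, by omega⟩)).2
          rwa [show j-1+1 = j from by omega] at h
        obtain ⟨z, hz1, hz2, hz3⟩ := poly_root_between pm hlt hmul
        exact ⟨z, fun _ => ⟨hz3, hz2, fun _ => hz1⟩⟩
    · exact ⟨0, fun h => absurd h hj⟩
  choose γ hγ using hexγ
  choose β hβ using hexβ
  have hβγ : ∀ j ∈ Icc 1 m, β j < γ j := by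
    intro j hj
    have h1 := (hβ j hj).2.1
    have h2 := (hγ j hj).2.1
    linarith
  have hγβ : ∀ j ∈ Icc 1 M, γ j < β (j+1) := by
    intro j hj
    rw [Finset.mem_Icc] at hj
    have h1 := ((hγ j (Finset.mem_Icc.mpr ⟨hj.1, by omega⟩)).2.2) hj.2
    have h2 := ((hβ (j+1) (Finset.mem_Icc.mpr ⟨by omega, by omega⟩)).2.2) (by omega)
    rw [show j+1-1 = j from by omega] at h2
    linarith
  have hγmono : StrictMonoOn γ (Set.Icc 1 m) := by
    refine chain_strictMonoOn γ m (fun j hj1 hj2 => ?_)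
    have h1 := hγβ j (Finset.mem_Icc.mpr ⟨hj1, by omega⟩)
    have h2 := hβγ (j+1) (Finset.mem_Icc.mpr ⟨by omega, hj2⟩)
    linarith
  have hβmono : StrictMonoOn β (Set.Icc 1 m) := by
    refine chain_strictMonoOn β m (fun j hj1 hj2 => ?_)
    have h1 := hβγ j (Finset.mem_Icc.mpr ⟨hj1, by omega⟩)
    have h2 := hγβ j (Finset.mem_Icc.mpr ⟨hj1, by omega⟩)
    linarith
  refine ⟨β, γ, ?_, ?_, hβγ, hγβ⟩
  · exact factor_of_roots pp m hppm hppd γ hγmono (fun j hj => (hγ j hj).1)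
  · exact factor_of_roots pm m hpmm hpmd β hβmono (fun j hj => (hβ j hj).1)

end FinalStage

section Pairing

lemma sum_pair (f : ℕ → ℝ) : ∀ k, ∑ i ∈ Icc 1 (2*k), f i
    = ∑ j ∈ Icc 1 k, (f (2*j-1) + f (2*j)) := by
  intro k
  induction k with
  | zero => simp
  | succ k ih =>
    rw [show 2*(k+1) = (2*k+1)+1 from by omega,
      Finset.sum_Icc_succ_top (by omega : 1 ≤ 2*k+1+1),
      Finset.sum_Icc_succ_top (by omega : 1 ≤ 2*k+1), ih,
      Finset.sum_Icc_succ_top (by omega : 1 ≤ k+1),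
      show 2*(k+1)-1 = 2*k+1 from by omega, show 2*(k+1) = 2*k+1+1 from by omega]
    ring

lemma prod_pair (f : ℕ → ℝ[X]) : ∀ k, ∏ i ∈ Icc 1 (2*k), f i
    = ∏ j ∈ Icc 1 k, (f (2*j-1) * f (2*j)) := by
  intro k
  induction k with
  | zero => simp
  | succ k ih =>
    rw [show 2*(k+1) = (2*k+1)+1 from by omega,
      Finset.prod_Icc_succ_top (by omega : 1 ≤ 2*k+1+1),
      Finset.prod_Icc_succ_top (by omega : 1 ≤ 2*k+1), ih,
      Finset.prod_Icc_succ_top (by omega : 1 ≤ k+1),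
      show 2*(k+1)-1 = 2*k+1 from by omega, show 2*(k+1) = 2*k+1+1 from by omega]
    ring

end Pairing

end Aux

/-- For `n` even, a persymmetric weighted path Hamiltonian with eigenvalues
`α 1 < ⋯ < α n` satisfies `r (n/2) = S₁/2` and `q (n/2) = S₂/(2 S₁)`, where
`S₁ = ∑ (-1)^(r+n) α r` and `S₂ = ∑ (-1)^(r+n) (α r)^2`. -/
theorem middle_entries_even (n : ℕ) (hn : 2 ≤ n) (heven : Even n) (q r : ℕ → ℝ)
    (hr : ∀ j, 1 ≤ j → j ≤ n - 1 → 0 < r j)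
    (hpersym : ∀ j k : Fin n,
      pathHamiltonian n q r j k = pathHamiltonian n q r k.rev j.rev)
    (α : ℕ → ℝ) (hα : StrictMonoOn α (Set.Icc 1 n))
    (hchar : (pathHamiltonian n q r).charpoly = ∏ i ∈ Finset.Icc 1 n, (X - C (α i)))
    (S₁ S₂ : ℝ)
    (hS₁ : S₁ = ∑ i ∈ Finset.Icc 1 n, (-1 : ℝ) ^ (i + n) * α i)
    (hS₂ : S₂ = ∑ i ∈ Finset.Icc 1 n, (-1 : ℝ) ^ (i + n) * (α i) ^ 2) :
    r (n / 2) = S₁ / 2 ∧ q (n / 2) = S₂ / (2 * S₁) := by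
  classical
  obtain ⟨m, hmeq⟩ := heven
  have hn2 : n = 2*m := by omega
  subst hn2
  have hm1 : 1 ≤ m := by omega
  -- entry lemmas
  have hdiag : ∀ (x : Fin (2*m)), pathHamiltonian (2*m) q r x x = q ((x:ℕ)+1) := by
    intro x
    show (if (x:ℕ) = (x:ℕ) then q ((x:ℕ)+1) else _) = _
    rw [if_pos rfl]
  have hsup : ∀ (x y : Fin (2*m)), (x:ℕ)+1 = (y:ℕ) →
      pathHamiltonian (2*m) q r x y = r ((x:ℕ)+1) := by
    intro x y hxy
    show (if (x:ℕ) = (y:ℕ) then q ((x:ℕ)+1)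
      else if (x:ℕ)+1 = (y:ℕ) then r ((x:ℕ)+1) else _) = _
    rw [if_neg (by omega), if_pos hxy]
  -- symmetry of q and r
  have hqsym : ∀ i j, 1 ≤ i → 1 ≤ j → i + j = 2*m+1 → q i = q j := by
    intro i j hi hj hij
    have hiN : i - 1 < 2*m := by omega
    have h := hpersym ⟨i-1, hiN⟩ ⟨i-1, hiN⟩
    rw [hdiag, hdiag] at h
    rw [Fin.val_rev] at h
    simp only at h
    rw [show i-1+1 = i from by omega, show 2*m - i + 1 = j from by omega] at h
    exact h
  have hrsym : ∀ i j, 1 ≤ i → 1 ≤ j → i + j = 2*m → r i = r j := by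
    intro i j hi hj hij
    have hiN : i - 1 < 2*m := by omega
    have hiN2 : i < 2*m := by omega
    have h := hpersym ⟨i-1, hiN⟩ ⟨i, hiN2⟩
    rw [hsup ⟨i-1, hiN⟩ ⟨i, hiN2⟩ (by simp; omega)] at h
    rw [hsup (Fin.rev ⟨i, hiN2⟩) (Fin.rev ⟨i-1, hiN⟩) (by rw [Fin.val_rev, Fin.val_rev]; simp; omega)] at h
    rw [Fin.val_rev] at h
    simp only at h
    rw [show i-1+1 = i from by omega, show 2*m - (i+1) + 1 = j from by omega] at h
    
    exact h
  have hrpos' : ∀ j, 1 ≤ j → j ≤ m → 0 < r j := fun j h1 h2 => hr j h1 (by omega)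
  have hrm : 0 < r m := hrpos' m hm1 le_rfl
  have hcharPP : (pathHamiltonian (2*m) q r).charpoly = PP q r (2*m) :=
    charpoly_pathHamiltonian (2*m) q r
  have hsplit := PP_split q r m hm1 hqsym hrsym
  obtain ⟨β, γ, hγfac, hβfac, hβγ, hγβ⟩ := final_stage q r m hm1 hrpos'
  set pp := PP q r m - C (r m) * PP q r (m-1) with hppdef
  set pm := PP q r m + C (r m) * PP q r (m-1) with hpmdef
  -- merged root sequence
  set δ : ℕ → ℝ := fun i => if i % 2 = 0 then γ (i/2) else β ((i+1)/2) with hδdef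
  have hδodd : ∀ j, 1 ≤ j → δ (2*j-1) = β j := by
    intro j hj
    simp only [hδdef]
    rw [if_neg (by omega)]
    congr 1
    omega
  have hδeven : ∀ j, 1 ≤ j → δ (2*j) = γ j := by
    intro j hj
    simp only [hδdef]
    rw [if_pos (by omega)]
    congr 1
    omega
  have hδmono : StrictMonoOn δ (Set.Icc 1 (2*m)) := by
    refine chain_strictMonoOn δ (2*m) (fun i hi1 hi2 => ?_)
    rcases Nat.even_or_odd i with ⟨k, hk⟩ | ⟨k, hk⟩
    · have hk1 : 1 ≤ k := by omega
      have h1 : δ i = γ k := by rw [show i = 2*k from by omega]; exact hδeven k hk1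
      have h2 : δ (i+1) = β (k+1) := by
        rw [show i+1 = 2*(k+1)-1 from by omega]; exact hδodd (k+1) (by omega)
      rw [h1, h2]
      exact hγβ k (Finset.mem_Icc.mpr ⟨hk1, by omega⟩)
    · have h1 : δ i = β (k+1) := by
        rw [show i = 2*(k+1)-1 from by omega]; exact hδodd (k+1) (by omega)
      have h2 : δ (i+1) = γ (k+1) := by
        rw [show i+1 = 2*(k+1) from by omega]; exact hδeven (k+1) (by omega)
      rw [h1, h2]
      exact hβγ (k+1) (Finset.mem_Icc.mpr ⟨by omega, by omega⟩)
  have hprodδ : ∏ i ∈ Finset.Icc 1 (2*m), (X - C (δ i)) = pp * pm := by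
    rw [prod_pair (fun i => X - C (δ i)) m]
    have hc : ∀ j ∈ Finset.Icc 1 m, (X - C (δ (2*j-1))) * (X - C (δ (2*j)))
        = (X - C (β j)) * (X - C (γ j)) := by
      intro j hj
      rw [Finset.mem_Icc] at hj
      rw [hδodd j hj.1, hδeven j hj.1]
    rw [Finset.prod_congr rfl hc, Finset.prod_mul_distrib, ← hγfac, ← hβfac]
    ring
  have hmatch : ∀ j ∈ Finset.Icc 1 (2*m), δ j = α j := by
    refine sorted_match (2*m) δ α hδmono hα ?_
    rw [hprodδ, ← hsplit, ← hcharPP, hchar]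
  have hαodd : ∀ j, 1 ≤ j → j ≤ m → α (2*j-1) = β j := by
    intro j hj1 hj2
    rw [← hmatch (2*j-1) (Finset.mem_Icc.mpr ⟨by omega, by omega⟩), hδodd j hj1]
  have hαeven : ∀ j, 1 ≤ j → j ≤ m → α (2*j) = γ j := by
    intro j hj1 hj2
    rw [← hmatch (2*j) (Finset.mem_Icc.mpr ⟨by omega, by omega⟩), hδeven j hj1]
  -- sums
  have hS1' : S₁ = (∑ j ∈ Finset.Icc 1 m, γ j) - (∑ j ∈ Finset.Icc 1 m, β j) := by
    rw [hS₁, sum_pair (fun i => (-1:ℝ)^(i+2*m) * α i) m, ← Finset.sum_sub_distrib]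
    refine Finset.sum_congr rfl (fun j hj => ?_)
    rw [Finset.mem_Icc] at hj
    have ho : (-1:ℝ)^(2*j-1+2*m) = -1 := Odd.neg_one_pow ⟨j+m-1, by omega⟩
    have he : (-1:ℝ)^(2*j+2*m) = 1 := Even.neg_one_pow ⟨j+m, by omega⟩
    rw [ho, he, hαodd j hj.1 hj.2, hαeven j hj.1 hj.2]
    ring
  have hS2' : S₂ = (∑ j ∈ Finset.Icc 1 m, (γ j)^2) - (∑ j ∈ Finset.Icc 1 m, (β j)^2) := by
    rw [hS₂, sum_pair (fun i => (-1:ℝ)^(i+2*m) * (α i)^2) m, ← Finset.sum_sub_distrib]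
    refine Finset.sum_congr rfl (fun j hj => ?_)
    rw [Finset.mem_Icc] at hj
    have ho : (-1:ℝ)^(2*j-1+2*m) = -1 := Odd.neg_one_pow ⟨j+m-1, by omega⟩
    have he : (-1:ℝ)^(2*j+2*m) = 1 := Even.neg_one_pow ⟨j+m, by omega⟩
    rw [ho, he, hαodd j hj.1 hj.2, hαeven j hj.1 hj.2]
    ring
  -- coefficient computations
  obtain ⟨M, hMeq⟩ : ∃ M, m = M+1 := ⟨m-1, by omega⟩
  have hM1 : m - 1 = M := by omega
  have hcγ : ∑ j ∈ Finset.Icc 1 m, γ j = (∑ j ∈ Finset.Icc 1 m, q j) + r m := by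
    have h1 : pp.coeff M = -(∑ j ∈ Finset.Icc 1 m, γ j) := by
      have h := prodXC_coeff_sum γ M
      rw [← hMeq] at h
      rw [hγfac, h]
    have h2 : pp.coeff M = -(∑ j ∈ Finset.Icc 1 m, q j) - r m := by
      have hnext := PP_coeff_next q r M
      rw [← hMeq] at hnext
      have htop : (PP q r M).coeff M = 1 := PP_coeff_top q r M
      rw [hppdef, coeff_sub, coeff_C_mul, hM1, hnext, htop]
      ring
    rw [h1] at h2
    linarith
  have hcβ : ∑ j ∈ Finset.Icc 1 m, β j = (∑ j ∈ Finset.Icc 1 m, q j) - r m := by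
    have h1 : pm.coeff M = -(∑ j ∈ Finset.Icc 1 m, β j) := by
      have h := prodXC_coeff_sum β M
      rw [← hMeq] at h
      rw [hβfac, h]
    have h2 : pm.coeff M = -(∑ j ∈ Finset.Icc 1 m, q j) + r m := by
      have hnext := PP_coeff_next q r M
      rw [← hMeq] at hnext
      have htop : (PP q r M).coeff M = 1 := PP_coeff_top q r M
      rw [hpmdef, coeff_add, coeff_C_mul, hM1, hnext, htop]
      ring
    rw [h1] at h2
    linarith
  have hS1v : S₁ = 2 * r m := by
    rw [hS1', hcγ, hcβ]; ring
  have hsum_split : (∑ j ∈ Finset.Icc 1 m, q j) = (∑ j ∈ Finset.Icc 1 M, q j) + q m := by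
    conv_lhs => rw [hMeq]
    rw [Finset.sum_Icc_succ_top (by omega : 1 ≤ M+1), ← hMeq]
  have hS2v : S₂ = 4 * r m * q m := by
    rcases Nat.eq_zero_or_pos M with hM0 | hMpos
    · -- m = 1
      have hmm : m = 1 := by omega
      have hγ1 : γ 1 = q 1 + r 1 := by
        have := hcγ
        rw [hmm, Finset.Icc_self, Finset.sum_singleton, Finset.sum_singleton] at this
        linarith
      have hβ1 : β 1 = q 1 - r 1 := by
        have := hcβ
        rw [hmm, Finset.Icc_self, Finset.sum_singleton, Finset.sum_singleton] at this
        linarith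
      rw [hS2', hmm, Finset.Icc_self, Finset.sum_singleton, Finset.sum_singleton, hγ1, hβ1]
      ring
    · obtain ⟨M', hM'⟩ : ∃ M', M = M'+1 := ⟨M-1, by omega⟩
      have hmM' : M'+2 = m := by omega
      have he2γ := prodXC_coeff_e2 γ M'
      rw [hmM'] at he2γ
      have he2β := prodXC_coeff_e2 β M'
      rw [hmM'] at he2β
      rw [← hγfac] at he2γ
      rw [← hβfac] at he2β
      have hcoeffdiff : pp.coeff M' - pm.coeff M' = 2 * r m * (∑ j ∈ Finset.Icc 1 M, q j) := by
        have hnext := PP_coeff_next q r M'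
        rw [← hM'] at hnext
        rw [hppdef, hpmdef, hM1, coeff_sub, coeff_add, coeff_C_mul, hnext]
        ring
      have hkey : S₂ = ((∑ j ∈ Finset.Icc 1 m, q j) + r m)^2
          - ((∑ j ∈ Finset.Icc 1 m, q j) - r m)^2
          - 2*(pp.coeff M' - pm.coeff M') := by
        rw [hS2']
        have hγsq : (∑ j ∈ Finset.Icc 1 m, (γ j)^2)
            = (∑ j ∈ Finset.Icc 1 m, γ j)^2 - 2*(pp.coeff M') := by linarith [he2γ]
        have hβsq : (∑ j ∈ Finset.Icc 1 m, (β j)^2)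
            = (∑ j ∈ Finset.Icc 1 m, β j)^2 - 2*(pm.coeff M') := by linarith [he2β]
        rw [hγsq, hβsq, hcγ, hcβ]
        ring
      rw [hkey, hcoeffdiff, hsum_split]
      ring
  have hrmne : r m ≠ 0 := ne_of_gt hrm
  constructor
  · rw [show 2*m/2 = m from by omega, hS1v]
    ring
  · rw [show 2*m/2 = m from by omega, hS2v, hS1v]
    field_simp
    ring
end

section
/- Let m ≥ 1, let E and C be arbitrary m×m real matrices, and let R be the m×m reversal matrix (ones on the antidiagonal, zeros elsewhere). Then the 2m×2m block matrix B = [[E, RCR], [C, RER]] is orthogonally similar to the block diagonal matrix diag(E - RC, E + RC); that is, there exists a real orthogonal 2m×2m matrix U with Uᵀ B U = diag(E - RC, E + RC). -/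
open Matrix

/-- The `m × m` reversal matrix: ones on the antidiagonal, zeros elsewhere. -/
noncomputable def reversal (m : ℕ) : Matrix (Fin m) (Fin m) ℝ :=
  Matrix.of fun j k => if (j : ℕ) + (k : ℕ) = m - 1 then 1 else 0

lemma reversal_eq (m : ℕ) :
    reversal m = Matrix.of fun j k : Fin m => if k = j.rev then 1 else 0 := by
  ext j k
  have hj := j.isLt
  have hk := k.isLt
  simp only [reversal, Matrix.of_apply]
  congr 1
  simp only [eq_iff_iff, Fin.ext_iff, Fin.val_rev]
  omega

lemma reversal_transpose (m : ℕ) : (reversal m)ᵀ = reversal m := by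
  ext j k
  simp only [reversal, Matrix.transpose_apply, Matrix.of_apply]
  congr 1
  simp only [eq_iff_iff]
  omega

lemma reversal_mul_self (m : ℕ) : reversal m * reversal m = 1 := by
  rw [reversal_eq]
  ext j k
  rw [Matrix.mul_apply, Finset.sum_eq_single j.rev]
  · simp [Matrix.one_apply, Fin.rev_rev, eq_comm]
  · intro x _ hx
    simp [hx]
  · simp

/-- The block matrix `[[E, RCR], [C, RER]]` is orthogonally similar to
`diag(E - RC, E + RC)`. -/
theorem cantoni_butler_even (m : ℕ) (hm : 1 ≤ m) (E C : Matrix (Fin m) (Fin m) ℝ) :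
    ∃ U : Matrix (Fin m ⊕ Fin m) (Fin m ⊕ Fin m) ℝ,
      Uᵀ * U = 1 ∧
      Uᵀ * (Matrix.fromBlocks E (reversal m * C * reversal m) C
              (reversal m * E * reversal m)) * U =
        Matrix.fromBlocks (E - reversal m * C) 0 0 (E + reversal m * C) := by
  set R := reversal m with hR
  have hRT : Rᵀ = R := reversal_transpose m
  have hRR : R * R = 1 := reversal_mul_self m
  set a : ℝ := (Real.sqrt 2)⁻¹ with ha
  have ha2 : a * a = 1/2 := by
    rw [ha, ← mul_inv, Real.mul_self_sqrt (by norm_num)]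
    norm_num
  refine ⟨Matrix.fromBlocks (a • 1) (a • 1) (-(a • R)) (a • R), ?_, ?_⟩
  · rw [Matrix.fromBlocks_transpose, Matrix.fromBlocks_multiply]
    simp only [Matrix.transpose_neg, Matrix.transpose_smul, Matrix.transpose_one, hRT,
      Matrix.neg_mul, Matrix.mul_neg, Matrix.smul_mul, Matrix.mul_smul, smul_smul, ha2,
      Matrix.one_mul, Matrix.mul_one, hRR]
    rw [← Matrix.fromBlocks_one, Matrix.fromBlocks_inj]
    refine ⟨?_, ?_, ?_, ?_⟩ <;> (try simp only [smul_neg, neg_neg, smul_smul, ha2]) <;> module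
  · rw [Matrix.fromBlocks_transpose, Matrix.fromBlocks_multiply, Matrix.fromBlocks_multiply]
    simp only [Matrix.transpose_neg, Matrix.transpose_smul, Matrix.transpose_one, hRT,
      Matrix.neg_mul, Matrix.mul_neg, Matrix.smul_mul, Matrix.mul_smul, smul_smul,
      Matrix.one_mul, Matrix.mul_one]
    have hRx : ∀ X : Matrix (Fin m) (Fin m) ℝ, R * (R * X) = X := fun X => by
      rw [← Matrix.mul_assoc, hRR, Matrix.one_mul]
    simp only [Matrix.add_mul, Matrix.neg_mul, Matrix.smul_mul, Matrix.mul_assoc, hRR,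
      Matrix.mul_one, hRx, smul_add, smul_neg, smul_smul, ha2]
    rw [Matrix.fromBlocks_inj]
    refine ⟨by module, by module, by module, by module⟩
end

section
/- Let m ≥ 1, let E and C be arbitrary m×m real matrices, let q be a real number, let x ∈ ℝ^m, and let R be the m×m reversal matrix. Then the (2m+1)×(2m+1) block matrix B = [[E, x, RCR], [xᵀ, q, xᵀR], [C, Rx, RER]] is orthogonally similar to the block diagonal matrix [[E - RC, 0, 0], [0, q, √2·xᵀ], [0, √2·x, E + RC]]; that is, there exists a real orthogonal (2m+1)×(2m+1) matrix U conjugating the former to the latter. -/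
open Matrix

lemma rev_key (m : ℕ) (j x : Fin m) : ((j : ℕ) + (x : ℕ) = m - 1) ↔ x = j.rev := by
  rw [Fin.ext_iff, Fin.val_rev]
  have := j.isLt; have := x.isLt
  omega

lemma smul_fromColumns {n n₁ n₂ : Type*} (c : ℝ) (A : Matrix n n₁ ℝ) (B : Matrix n n₂ ℝ) :
    c • fromCols A B = fromCols (c • A) (c • B) := by
  ext i j; cases j <;> simp

lemma smul_fromRows {n n₁ n₂ : Type*} (c : ℝ) (A : Matrix n₁ n ℝ) (B : Matrix n₂ n ℝ) :
    c • fromRows A B = fromRows (c • A) (c • B) := by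
  ext i j; cases i <;> simp

lemma fromColumns_add {n n₁ n₂ : Type*} (A A' : Matrix n n₁ ℝ) (B B' : Matrix n n₂ ℝ) :
    fromCols A B + fromCols A' B' = fromCols (A + A') (B + B') := by
  ext i j; cases j <;> simp

lemma fromRows_add {n n₁ n₂ : Type*} (A A' : Matrix n₁ n ℝ) (B B' : Matrix n₂ n ℝ) :
    fromRows A B + fromRows A' B' = fromRows (A + A') (B + B') := by
  ext i j; cases i <;> simp

lemma fromColumns_zero_fromRows {n₁ n₂ m₁ m₂ : Type*} (A : Matrix m₁ n₂ ℝ) (B : Matrix m₂ n₂ ℝ) :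
    fromCols (0 : Matrix (m₁ ⊕ m₂) n₁ ℝ) (fromRows A B) = fromBlocks 0 A 0 B := by
  ext i j; cases i <;> cases j <;> simp [fromCols, fromBlocks]


/-- The block matrix `[[E, x, RCR], [xᵀ, q, xᵀR], [C, Rx, RER]]` is orthogonally
similar to `[[E - RC, 0, 0], [0, q, √2 xᵀ], [0, √2 x, E + RC]]`. -/
theorem cantoni_butler_odd (m : ℕ) (hm : 1 ≤ m) (E C : Matrix (Fin m) (Fin m) ℝ)
    (q : ℝ) (x : Fin m → ℝ) :
    ∃ U : Matrix (Fin m ⊕ (Fin 1 ⊕ Fin m)) (Fin m ⊕ (Fin 1 ⊕ Fin m)) ℝ,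
      Uᵀ * U = 1 ∧
      Uᵀ *
        (Matrix.fromBlocks E
          (Matrix.fromCols (Matrix.replicateCol (Fin 1) x) (reversal m * C * reversal m))
          (Matrix.fromRows (Matrix.replicateRow (Fin 1) x) C)
          (Matrix.fromBlocks (q • (1 : Matrix (Fin 1) (Fin 1) ℝ))
            (Matrix.replicateRow (Fin 1) x * reversal m)
            (reversal m * Matrix.replicateCol (Fin 1) x)
            (reversal m * E * reversal m))) * U =
      Matrix.fromBlocks (E - reversal m * C) 0 0
        (Matrix.fromBlocks (q • (1 : Matrix (Fin 1) (Fin 1) ℝ))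
          (Real.sqrt 2 • Matrix.replicateRow (Fin 1) x)
          (Real.sqrt 2 • Matrix.replicateCol (Fin 1) x)
          (E + reversal m * C)) := by
  set s : ℝ := (Real.sqrt 2)⁻¹ with hs
  have hR : (reversal m)ᵀ = reversal m := reversal_transpose m
  have hRR : reversal m * reversal m = 1 := reversal_mul_self m
  have h2 : s * s = 2⁻¹ := by
    rw [hs, ← mul_inv, Real.mul_self_sqrt (by norm_num)]
  refine ⟨Matrix.fromBlocks (s • 1) (Matrix.fromCols 0 (s • 1))
    (Matrix.fromRows 0 (-(s • reversal m))) (Matrix.fromBlocks 1 0 0 (s • reversal m)), ?_, ?_⟩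
  · simp only [fromBlocks_transpose, transpose_fromCols, transpose_fromRows,
      transpose_smul, transpose_one, transpose_zero, transpose_neg, hR,
      fromBlocks_multiply, fromCols_mul_fromRows, fromRows_mul_fromCols,
      fromCols_mul_fromBlocks, fromBlocks_mul_fromRows,
      Matrix.mul_smul, Matrix.smul_mul, Matrix.mul_one, Matrix.one_mul,
      Matrix.mul_zero, Matrix.zero_mul, smul_zero, neg_mul, mul_neg, smul_neg, neg_neg,
      hRR, add_zero, zero_add, smul_smul, h2,
      smul_fromColumns, smul_fromRows, fromColumns_add, fromRows_add,
      fromBlocks_smul, fromBlocks_add, neg_zero, add_neg_cancel, neg_add_cancel]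
    rw [← add_smul]
    norm_num [fromCols_zero, fromRows_zero]
  · have hA : ∀ {n : Type} (A : Matrix (Fin m) n ℝ),
        reversal m * (reversal m * A) = A := by
      intro n A; rw [← Matrix.mul_assoc, hRR, Matrix.one_mul]
    have hB : ∀ {n : Type} (A : Matrix n (Fin m) ℝ),
        A * reversal m * reversal m = A := by
      intro n A; rw [Matrix.mul_assoc, hRR, Matrix.mul_one]
    simp only [fromBlocks_transpose, transpose_fromCols, transpose_fromRows,
      transpose_smul, transpose_one, transpose_zero, transpose_neg, hR,
      fromBlocks_multiply, fromCols_mul_fromRows, fromRows_mul_fromCols,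
      fromCols_mul_fromBlocks, fromBlocks_mul_fromRows,
      fromRows_mul, mul_fromCols, Matrix.add_mul, Matrix.mul_add,
      Matrix.mul_smul, Matrix.smul_mul, Matrix.mul_one, Matrix.one_mul,
      Matrix.mul_zero, Matrix.zero_mul, smul_zero, neg_mul, mul_neg, smul_neg, neg_neg,
      Matrix.mul_assoc, hA, hB, hRR, add_zero, zero_add, smul_smul, smul_add, h2,
      Matrix.neg_mul, Matrix.mul_neg,
      smul_fromColumns, smul_fromRows, fromColumns_add, fromRows_add,
      fromCols_fromRows_eq_fromBlocks, fromColumns_zero_fromRows,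
      fromBlocks_smul, fromBlocks_add, neg_zero, add_neg_cancel, neg_add_cancel,
      fromRows_zero, fromCols_zero]
    have hss : Real.sqrt 2 = s + s := by
      rw [hs, ← two_mul, eq_comm]
      field_simp
      rw [Real.sq_sqrt (by norm_num)]
    rw [hss]
    ext i j
    rcases i with i | i | i <;> rcases j with j | j | j <;>
      simp [fromBlocks, fromCols, Matrix.replicateRow, Matrix.replicateCol, Matrix.one_apply] <;>
      ring
end

section
/- Let A be the Hamiltonian of a weighted path on 4 vertices with potentials, i.e., a real symmetric tridiagonal 4×4 matrix with off-diagonal entries r_1, r_2, r_3 > 0 and diagonal entries q_1, q_2, q_3, q_4. If all of r_1, r_2, r_3, q_1, q_2, q_3, q_4 are rational numbers, then there is no perfect state transfer from vertex 1 to vertex 4 at time π, i.e., |(e^{iπA})_{1,4}| < 1. -/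
open Matrix

private lemma sq4 {P R K : ℤ} (h : P ^ 2 + R ^ 2 = 4 * K) : Even P ∧ Even R := by
  rcases Int.even_or_odd P with ⟨p, hp⟩ | ⟨p, hp⟩ <;>
    rcases Int.even_or_odd R with ⟨s, hs⟩ | ⟨s, hs⟩ <;> subst hp hs
  · exact ⟨⟨p, rfl⟩, ⟨s, rfl⟩⟩
  · exfalso
    have h2 : 4 * (p * p + s * s + s) + 1 = 4 * K := by ring_nf; ring_nf at h; linarith
    omega
  · exfalso
    have h2 : 4 * (p * p + p + s * s) + 1 = 4 * K := by ring_nf; ring_nf at h; linarith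
    omega
  · exfalso
    have h2 : 4 * (p * p + p + s * s + s) + 2 = 4 * K := by ring_nf; ring_nf at h; linarith
    omega

private lemma evenN : ∀ s : ℕ, ∀ S P R T N D : ℤ, S.natAbs = s → S ≠ 0 →
    P ^ 2 + R ^ 2 = T ^ 2 * S ^ 2 → N * S = 2 * D * P → Even N := by
  intro s
  induction s using Nat.strong_induction_on with
  | _ s ih =>
    intro S P R T N D hs hS0 hsq hN
    rcases Int.even_or_odd S with ⟨S', hS'⟩ | ⟨S', hS'⟩
    · -- S = 2 S'
      have hK : P ^ 2 + R ^ 2 = 4 * (T ^ 2 * S' ^ 2) := by rw [hsq, hS']; ring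
      obtain ⟨⟨p, hp⟩, ⟨rr, hrr⟩⟩ := sq4 hK
      have hS'0 : S' ≠ 0 := by omega
      have hlt : S'.natAbs < s := by omega
      subst hp hrr hS'
      refine ih S'.natAbs hlt S' p rr T N D rfl hS'0 ?_ ?_
      · refine mul_left_cancel₀ (a := (4:ℤ)) (by norm_num) ?_
        linear_combination hsq
      · refine mul_left_cancel₀ (a := (2:ℤ)) (by norm_num) ?_
        linear_combination hN
    · -- S odd
      have h2 : (2 : ℤ) ∣ N * S := ⟨D * P, by linarith⟩
      have : ¬ (2:ℤ) ∣ S := by omega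
      rcases Int.prime_two.dvd_mul.1 h2 with h | h
      · exact even_iff_two_dvd.2 h
      · exact absurd h this

private lemma colnorm {U : Matrix (Fin 4) (Fin 4) ℂ} (h : Uᴴ * U = 1) (k : Fin 4) :
    Complex.normSq (U 0 k) + Complex.normSq (U 1 k) + Complex.normSq (U 2 k) +
      Complex.normSq (U 3 k) = 1 := by
  have h1 : (Uᴴ * U) k k = 1 := by rw [h, Matrix.one_apply_eq]
  rw [Matrix.mul_apply, Fin.sum_univ_four] at h1
  simp only [Matrix.conjTranspose_apply, Complex.star_def] at h1
  have h2 : ((Complex.normSq (U 0 k) + Complex.normSq (U 1 k) + Complex.normSq (U 2 k) +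
      Complex.normSq (U 3 k) : ℝ) : ℂ) = 1 := by
    push_cast
    rw [← h1]
    simp only [Complex.normSq_eq_conj_mul_self]
  exact_mod_cast h2

private lemma eig_sym (a b c d μ : ℂ) (hμ : (μ - a) * (μ - (b + d)) = c ^ 2) :
    !![a, c, 0, 0; c, b, d, 0; 0, d, b, c; 0, 0, c, a] *ᵥ ![c, μ - a, μ - a, c] =
      μ • ![c, μ - a, μ - a, c] := by
  funext i
  fin_cases i <;> simp [Matrix.mulVec, dotProduct, Fin.sum_univ_four]
  all_goals first
    | linear_combination hμ
    | linear_combination -hμ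
    | linear_combination (2:ℂ)*hμ
    | linear_combination (-2:ℂ)*hμ
    | ring

private lemma eig_asym (a b c d ν : ℂ) (hν : (ν - a) * (ν - (b - d)) = c ^ 2) :
    !![a, c, 0, 0; c, b, d, 0; 0, d, b, c; 0, 0, c, a] *ᵥ ![c, ν - a, -(ν - a), -c] =
      ν • ![c, ν - a, -(ν - a), -c] := by
  funext i
  fin_cases i <;> simp [Matrix.mulVec, dotProduct, Fin.sum_univ_four]
  all_goals first
    | linear_combination hν
    | linear_combination -hν
    | linear_combination (2:ℂ)*hν
    | linear_combination (-2:ℂ)*hν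
    | ring

private lemma exp_mulVec_eigen {n : ℕ} (M : Matrix (Fin n) (Fin n) ℂ) (v : Fin n → ℂ) (lam : ℂ)
    (h : M *ᵥ v = lam • v) :
    (NormedSpace.exp M) *ᵥ v = Complex.exp lam • v := by
  letI : SeminormedRing (Matrix (Fin n) (Fin n) ℂ) := Matrix.linftyOpSemiNormedRing
  letI : NormedRing (Matrix (Fin n) (Fin n) ℂ) := Matrix.linftyOpNormedRing
  letI : NormedAlgebra ℂ (Matrix (Fin n) (Fin n) ℂ) := Matrix.linftyOpNormedAlgebra
  have hpow : ∀ k : ℕ, (M ^ k) *ᵥ v = (lam ^ k) • v := by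
    intro k
    induction k with
    | zero => simp
    | succ k ih =>
      rw [pow_succ, ← Matrix.mulVec_mulVec, h, Matrix.mulVec_smul, ih, smul_smul, pow_succ]
      ring_nf
  let L : Matrix (Fin n) (Fin n) ℂ →ₗ[ℂ] (Fin n → ℂ) :=
    { toFun := fun A => A *ᵥ v
      map_add' := fun A B => Matrix.add_mulVec A B v
      map_smul' := fun c A => by simp [Matrix.smul_mulVec] }
  have hsum : Summable fun k : ℕ => (((Nat.factorial k : ℕ) : ℂ)⁻¹) • M ^ k :=
    NormedSpace.expSeries_summable' (𝕂 := ℂ) M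
  have hmap : (NormedSpace.exp M) *ᵥ v = ∑' k : ℕ, L ((((Nat.factorial k : ℕ) : ℂ)⁻¹) • M ^ k) := by
    rw [NormedSpace.exp_eq_tsum ℂ]
    exact (hsum.hasSum.mapL L.toContinuousLinearMap).tsum_eq.symm
  rw [hmap]
  have hterm : ∀ k : ℕ, L ((((Nat.factorial k : ℕ) : ℂ)⁻¹) • M ^ k) = ((((Nat.factorial k : ℕ) : ℂ)⁻¹) * lam ^ k) • v := by
    intro k
    rw [L.map_smul]
    simp only [L, LinearMap.coe_mk, AddHom.coe_mk]
    rw [hpow k, smul_smul]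
  rw [tsum_congr hterm]
  have hsum2 : Summable fun k : ℕ => (((Nat.factorial k : ℕ) : ℂ)⁻¹) * lam ^ k := by
    simpa [smul_eq_mul] using NormedSpace.expSeries_summable' (𝕂 := ℂ) (𝔸 := ℂ) lam
  rw [hsum2.tsum_smul_const]
  congr 1
  rw [Complex.exp_eq_exp_ℂ, NormedSpace.exp_eq_tsum ℂ]
  simp [smul_eq_mul]

-- entries of the complexified Hamiltonian
private lemma pathH_eq (q r : ℕ → ℝ) : (pathHamiltonian 4 q r).map (fun x => (x : ℂ)) =
    !![(q 1 : ℂ), (r 1 : ℂ), 0, 0;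
       (r 1 : ℂ), (q 2 : ℂ), (r 2 : ℂ), 0;
       0, (r 2 : ℂ), (q 3 : ℂ), (r 3 : ℂ);
       0, 0, (r 3 : ℂ), (q 4 : ℂ)] := by
  ext i j
  fin_cases i <;> fin_cases j <;>
    simp [pathHamiltonian, Matrix.map_apply, show ((3 : Fin 4) : ℕ) = 3 by rfl, Matrix.vecHead, Matrix.vecTail]

/-- A weighted path on 4 vertices with potentials, all of whose edge weights and
potentials are rational, admits no PST from vertex 1 to vertex 4 at time `π`. -/
theorem no_pst_rational_path_four (q r : ℕ → ℝ)
    (hr : ∀ j, 1 ≤ j → j ≤ 3 → 0 < r j)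
    (hrrat : ∀ j, 1 ≤ j → j ≤ 3 → ∃ a : ℚ, r j = (a : ℝ))
    (hqrat : ∀ j, 1 ≤ j → j ≤ 4 → ∃ a : ℚ, q j = (a : ℝ)) :
    transferAmp 4 (pathHamiltonian 4 q r) Real.pi 0 3 < 1 := by
  have hr1 : 0 < r 1 := hr 1 le_rfl (by norm_num)
  have hr2 : 0 < r 2 := hr 2 (by norm_num) (by norm_num)
  have hr3 : 0 < r 3 := hr 3 (by norm_num) le_rfl
  unfold transferAmp
  rw [pathH_eq q r]
  set Ac : Matrix (Fin 4) (Fin 4) ℂ :=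
    !![(q 1 : ℂ), (r 1 : ℂ), 0, 0; (r 1 : ℂ), (q 2 : ℂ), (r 2 : ℂ), 0;
       0, (r 2 : ℂ), (q 3 : ℂ), (r 3 : ℂ); 0, 0, (r 3 : ℂ), (q 4 : ℂ)] with hAc
  set M : Matrix (Fin 4) (Fin 4) ℂ := (Complex.I * (Real.pi : ℂ)) • Ac with hM
  set U : Matrix (Fin 4) (Fin 4) ℂ := NormedSpace.exp M with hU
  have hAcH : Acᴴ = Ac := by
    rw [hAc]; ext i j; fin_cases i <;> fin_cases j <;>
      simp [Matrix.conjTranspose_apply, Complex.conj_ofReal, Matrix.vecHead, Matrix.vecTail]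
  have hAcT : Acᵀ = Ac := by
    rw [hAc]; ext i j; fin_cases i <;> fin_cases j <;> simp [Matrix.vecHead, Matrix.vecTail]
  have hMH : Mᴴ = -M := by
    rw [hM, Matrix.conjTranspose_smul, hAcH]
    have hst : star (Complex.I * (Real.pi : ℂ)) = -(Complex.I * (Real.pi : ℂ)) := by
      simp [Complex.star_def, Complex.conj_I, Complex.conj_ofReal]
      try ring
    rw [hst, neg_smul]
  have hUunit : Uᴴ * U = 1 := by
    rw [hU, ← Matrix.exp_conjTranspose, hMH,
      ← Matrix.exp_add_of_commute (-M) M (Commute.neg_left (Commute.refl M)), neg_add_cancel,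
      NormedSpace.exp_zero]
  have hUsymm : ∀ i j : Fin 4, U i j = U j i := by
    have h1 : Uᵀ = U := by
      rw [hU, ← Matrix.exp_transpose]
      congr 1
      rw [hM, Matrix.transpose_smul, hAcT]
    intro i j
    have h2 := congrFun (congrFun h1 j) i
    rw [Matrix.transpose_apply] at h2
    exact h2
  have hcomm : Ac * U = U * Ac := by
    have h1 : Commute Ac M := (Commute.refl Ac).smul_right _
    exact (Commute.exp_right h1).eq
  have hcol3 := colnorm hUunit 3
  have habs_le : ‖U 0 3‖ ≤ 1 := by
    nlinarith [Complex.normSq_nonneg (U 1 3), Complex.normSq_nonneg (U 2 3),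
      Complex.normSq_nonneg (U 3 3), Complex.sq_norm (U 0 3),
      norm_nonneg (U 0 3), hcol3]
  rcases lt_or_eq_of_le habs_le with hlt | habs
  · exact hlt
  exfalso
  have hnγ : Complex.normSq (U 0 3) = 1 := by
    rw [Complex.normSq_eq_norm_sq, habs]; norm_num
  have hγne : U 0 3 ≠ 0 := by
    intro h; rw [h] at habs; simp at habs
  have h13 : U 1 3 = 0 := by
    apply Complex.normSq_eq_zero.1
    linarith [Complex.normSq_nonneg (U 1 3), Complex.normSq_nonneg (U 2 3), Complex.normSq_nonneg (U 3 3), hcol3, hnγ]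
  have h23 : U 2 3 = 0 := by
    apply Complex.normSq_eq_zero.1
    linarith [Complex.normSq_nonneg (U 2 3), Complex.normSq_nonneg (U 1 3), Complex.normSq_nonneg (U 3 3), hcol3, hnγ]
  have h33 : U 3 3 = 0 := by
    apply Complex.normSq_eq_zero.1
    linarith [Complex.normSq_nonneg (U 3 3), Complex.normSq_nonneg (U 1 3), Complex.normSq_nonneg (U 2 3), hcol3, hnγ]
  have h30 : U 3 0 = U 0 3 := (hUsymm 0 3).symm
  have hcol0 := colnorm hUunit 0
  rw [h30] at hcol0
  have h00 : U 0 0 = 0 := by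
    apply Complex.normSq_eq_zero.1
    linarith [Complex.normSq_nonneg (U 0 0), Complex.normSq_nonneg (U 1 0), Complex.normSq_nonneg (U 2 0), hcol0, hnγ]
  have h10 : U 1 0 = 0 := by
    apply Complex.normSq_eq_zero.1
    linarith [Complex.normSq_nonneg (U 1 0), Complex.normSq_eq_zero.2 h00, Complex.normSq_nonneg (U 2 0), hcol0, hnγ]
  have h20 : U 2 0 = 0 := by
    apply Complex.normSq_eq_zero.1
    linarith [Complex.normSq_nonneg (U 2 0), Complex.normSq_eq_zero.2 h00, Complex.normSq_eq_zero.2 h10, hcol0, hnγ]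
  have h01 : U 0 1 = 0 := (hUsymm 0 1).trans h10
  have h02 : U 0 2 = 0 := (hUsymm 0 2).trans h20
  have h31 : U 3 1 = 0 := (hUsymm 3 1).trans h13
  have h32 : U 3 2 = 0 := (hUsymm 3 2).trans h23
  -- commutation entry (3,0) : q 4 = q 1
  have hc30 := congrFun (congrFun hcomm 3) 0
  rw [Matrix.mul_apply, Matrix.mul_apply, Fin.sum_univ_four, Fin.sum_univ_four] at hc30
  simp [hAc, h00, h10, h20, h30, h31, h32, h33, Matrix.vecHead, Matrix.vecTail] at hc30
  have hq41C : (q 4 : ℂ) = (q 1 : ℂ) := by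
    have h2 : ((q 4 : ℂ) - (q 1 : ℂ)) * U 0 3 = 0 := by
      first
        | linear_combination hc30
        | linear_combination -hc30
    rcases mul_eq_zero.1 h2 with h3 | h3
    · exact sub_eq_zero.1 h3
    · exact absurd h3 hγne
  have hq41 : q 4 = q 1 := by exact_mod_cast hq41C
  -- entry (1,0) : U 1 1 = 0
  have hc10 := congrFun (congrFun hcomm 1) 0
  rw [Matrix.mul_apply, Matrix.mul_apply, Fin.sum_univ_four, Fin.sum_univ_four] at hc10
  simp [hAc, h00, h10, h20, h30, h13, Matrix.vecHead, Matrix.vecTail] at hc10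
  have hr1C : (r 1 : ℂ) ≠ 0 := by
    simpa using Complex.ofReal_ne_zero.2 hr1.ne'
  have h11 : U 1 1 = 0 := hc10.resolve_right hr1.ne'
  -- entry (2,0)
  have hc20 := congrFun (congrFun hcomm 2) 0
  rw [Matrix.mul_apply, Matrix.mul_apply, Fin.sum_univ_four, Fin.sum_univ_four] at hc20
  simp [hAc, h00, h10, h20, h30, Matrix.vecHead, Matrix.vecTail] at hc20
  have hU21 : (r 1 : ℂ) * U 2 1 = (r 3 : ℂ) * U 0 3 := by
    first
      | linear_combination hc20
      | linear_combination -hc20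
  -- column 1
  have hcol1 := colnorm hUunit 1
  rw [h01, h11, h31] at hcol1
  simp only [Complex.normSq_zero] at hcol1
  have hn21 : Complex.normSq (U 2 1) = 1 := by linarith
  have hns : Complex.normSq ((r 1 : ℂ) * U 2 1) = Complex.normSq ((r 3 : ℂ) * U 0 3) :=
    congrArg Complex.normSq hU21
  rw [Complex.normSq_mul, Complex.normSq_mul, Complex.normSq_ofReal, Complex.normSq_ofReal,
    hn21, hnγ] at hns
  have hr31 : r 3 = r 1 := by nlinarith [hr1, hr3]
  have h21 : U 2 1 = U 0 3 := by
    apply mul_left_cancel₀ hr1C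
    rw [hU21, hr31]
  have h12 : U 1 2 = U 0 3 := (hUsymm 1 2).trans h21
  -- column 2
  have hcol2 := colnorm hUunit 2
  rw [h02, h12, h32] at hcol2
  simp only [Complex.normSq_zero, hnγ] at hcol2
  have h22 : U 2 2 = 0 := by
    apply Complex.normSq_eq_zero.1
    linarith
  -- entry (2,1) : q 3 = q 2
  have hc21 := congrFun (congrFun hcomm 2) 1
  rw [Matrix.mul_apply, Matrix.mul_apply, Fin.sum_univ_four, Fin.sum_univ_four] at hc21
  simp [hAc, h11, h21, h31, h20, h22, h23, Matrix.vecHead, Matrix.vecTail] at hc21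
  have hq32 : q 3 = q 2 := by
    have h2 : ((q 3 : ℂ) - (q 2 : ℂ)) * U 0 3 = 0 := by
      first
        | linear_combination hc21
        | linear_combination -hc21
    rcases mul_eq_zero.1 h2 with h3 | h3
    · exact_mod_cast sub_eq_zero.1 h3
    · exact absurd h3 hγne
  -- symmetric form of the Hamiltonian
  set a := q 1 with ha
  set b := q 2 with hb
  set c := r 1 with hc
  set d := r 2 with hd
  have hAc2 : Ac = !![(a:ℂ), (c:ℂ), 0, 0; (c:ℂ), (b:ℂ), (d:ℂ), 0;
      0, (d:ℂ), (b:ℂ), (c:ℂ); 0, 0, (c:ℂ), (a:ℂ)] := by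
    rw [hAc, hq41, hq32, hr31]
  have hcne : (c:ℂ) ≠ 0 := Complex.ofReal_ne_zero.2 hr1.ne'
  -- eigenvalues
  have hEnn : (0:ℝ) ≤ (a - b - d)^2 + 4*c^2 := by positivity
  have hFnn : (0:ℝ) ≤ (a - b + d)^2 + 4*c^2 := by positivity
  set E := Real.sqrt ((a - b - d)^2 + 4*c^2) with hE
  set F := Real.sqrt ((a - b + d)^2 + 4*c^2) with hF
  have hE2 : E^2 = (a - b - d)^2 + 4*c^2 := Real.sq_sqrt hEnn
  have hF2 : F^2 = (a - b + d)^2 + 4*c^2 := Real.sq_sqrt hFnn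
  set μ₁ := ((a + b + d) + E)/2 with hμ₁
  set μ₂ := ((a + b + d) - E)/2 with hμ₂
  set ν₁ := ((a + b - d) + F)/2 with hν₁
  set ν₂ := ((a + b - d) - F)/2 with hν₂
  have key : ∀ μ : ℝ, (μ - a) * (μ - (b + d)) = c^2 →
      Complex.exp (Complex.I * (Real.pi:ℂ) * (μ:ℂ)) = U 0 3 := by
    intro μ hμR
    have hμC : ((μ:ℂ) - (a:ℂ)) * ((μ:ℂ) - ((b:ℂ) + (d:ℂ))) = (c:ℂ)^2 := by
      exact_mod_cast hμR
    have heig := eig_sym (a:ℂ) (b:ℂ) (c:ℂ) (d:ℂ) (μ:ℂ) hμC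
    rw [← hAc2] at heig
    have hMv : M *ᵥ ![(c:ℂ), (μ:ℂ) - (a:ℂ), (μ:ℂ) - (a:ℂ), (c:ℂ)] =
        (Complex.I * (Real.pi:ℂ) * (μ:ℂ)) • ![(c:ℂ), (μ:ℂ) - (a:ℂ), (μ:ℂ) - (a:ℂ), (c:ℂ)] := by
      rw [hM, Matrix.smul_mulVec, heig, smul_smul]
    have hexp := exp_mulVec_eigen M _ _ hMv
    rw [← hU] at hexp
    have hUv : U *ᵥ ![(c:ℂ), (μ:ℂ) - (a:ℂ), (μ:ℂ) - (a:ℂ), (c:ℂ)] =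
        U 0 3 • ![(c:ℂ), (μ:ℂ) - (a:ℂ), (μ:ℂ) - (a:ℂ), (c:ℂ)] := by
      funext i
      fin_cases i <;>
        simp [Matrix.mulVec, dotProduct, Fin.sum_univ_four,
          h00, h01, h02, h10, h11, h13, h20, h22, h23, h31, h32, h33, h12, h21, h30] <;> ring
    have hcomp := congrFun (hexp.symm.trans hUv) 0
    simp only [Pi.smul_apply, Matrix.cons_val_zero, smul_eq_mul] at hcomp
    exact mul_right_cancel₀ hcne hcomp
  have keyA : ∀ ν : ℝ, (ν - a) * (ν - (b - d)) = c^2 →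
      Complex.exp (Complex.I * (Real.pi:ℂ) * (ν:ℂ)) = -(U 0 3) := by
    intro ν hνR
    have hνC : ((ν:ℂ) - (a:ℂ)) * ((ν:ℂ) - ((b:ℂ) - (d:ℂ))) = (c:ℂ)^2 := by
      exact_mod_cast hνR
    have heig := eig_asym (a:ℂ) (b:ℂ) (c:ℂ) (d:ℂ) (ν:ℂ) hνC
    rw [← hAc2] at heig
    have hMv : M *ᵥ ![(c:ℂ), (ν:ℂ) - (a:ℂ), -((ν:ℂ) - (a:ℂ)), -(c:ℂ)] =
        (Complex.I * (Real.pi:ℂ) * (ν:ℂ)) • ![(c:ℂ), (ν:ℂ) - (a:ℂ), -((ν:ℂ) - (a:ℂ)), -(c:ℂ)] := by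
      rw [hM, Matrix.smul_mulVec, heig, smul_smul]
    have hexp := exp_mulVec_eigen M _ _ hMv
    rw [← hU] at hexp
    have hUv : U *ᵥ ![(c:ℂ), (ν:ℂ) - (a:ℂ), -((ν:ℂ) - (a:ℂ)), -(c:ℂ)] =
        (-(U 0 3)) • ![(c:ℂ), (ν:ℂ) - (a:ℂ), -((ν:ℂ) - (a:ℂ)), -(c:ℂ)] := by
      funext i
      fin_cases i <;>
        simp [Matrix.mulVec, dotProduct, Fin.sum_univ_four,
          h00, h01, h02, h10, h11, h13, h20, h22, h23, h31, h32, h33, h12, h21, h30] <;> ring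
    have hcomp := congrFun (hexp.symm.trans hUv) 0
    simp only [Pi.smul_apply, Matrix.cons_val_zero, smul_eq_mul] at hcomp
    exact mul_right_cancel₀ hcne hcomp
  have hqd1 : (μ₁ - a) * (μ₁ - (b + d)) = c^2 := by rw [hμ₁]; linear_combination hE2/4
  have hqd2 : (μ₂ - a) * (μ₂ - (b + d)) = c^2 := by rw [hμ₂]; linear_combination hE2/4
  have hqd3 : (ν₁ - a) * (ν₁ - (b - d)) = c^2 := by rw [hν₁]; linear_combination hF2/4
  have hqd4 : (ν₂ - a) * (ν₂ - (b - d)) = c^2 := by rw [hν₂]; linear_combination hF2/4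
  have hIπ : Complex.I * (Real.pi:ℂ) ≠ 0 := by
    simp [Complex.I_ne_zero, Complex.ofReal_ne_zero, Real.pi_ne_zero]
  obtain ⟨n, hn⟩ := Complex.exp_eq_exp_iff_exists_int.1 ((key μ₁ hqd1).trans (key μ₂ hqd2).symm)
  obtain ⟨k, hk⟩ := Complex.exp_eq_exp_iff_exists_int.1 ((keyA ν₁ hqd3).trans (keyA ν₂ hqd4).symm)
  have hEn : E = 2*(n:ℝ) := by
    have h2 : (Complex.I * (Real.pi:ℂ)) * ((μ₁:ℂ) - (μ₂:ℂ) - 2*(n:ℂ)) = 0 := by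
      linear_combination hn
    have h3 := (mul_eq_zero.1 h2).resolve_left hIπ
    have h4 : μ₁ - μ₂ - 2*(n:ℝ) = 0 := by exact_mod_cast h3
    rw [hμ₁, hμ₂] at h4; linarith
  have hFk : F = 2*(k:ℝ) := by
    have h2 : (Complex.I * (Real.pi:ℂ)) * ((ν₁:ℂ) - (ν₂:ℂ) - 2*(k:ℂ)) = 0 := by
      linear_combination hk
    have h3 := (mul_eq_zero.1 h2).resolve_left hIπ
    have h4 : ν₁ - ν₂ - 2*(k:ℝ) = 0 := by exact_mod_cast h3
    rw [hν₁, hν₂] at h4; linarith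
  -- mixed parity
  have hmix : Complex.exp (Complex.I * (Real.pi:ℂ) * (μ₁:ℂ)) =
      Complex.exp (Complex.I * (Real.pi:ℂ) * (ν₁:ℂ) + (Real.pi:ℂ) * Complex.I) := by
    rw [Complex.exp_add, Complex.exp_pi_mul_I, key μ₁ hqd1, keyA ν₁ hqd3]; ring
  obtain ⟨m, hm⟩ := Complex.exp_eq_exp_iff_exists_int.1 hmix
  have hμν : μ₁ - ν₁ - 1 - 2*(m:ℝ) = 0 := by
    have h2 : (Complex.I * (Real.pi:ℂ)) * ((μ₁:ℂ) - (ν₁:ℂ) - 1 - 2*(m:ℂ)) = 0 := by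
      linear_combination hm
    have h3 := (mul_eq_zero.1 h2).resolve_left hIπ
    exact_mod_cast h3
  set D : ℤ := 1 + 2*m - n + k with hDdef
  have hdD : d = (D:ℝ) := by
    have h5 : μ₁ - ν₁ = d + E/2 - F/2 := by rw [hμ₁, hν₁]; ring
    rw [hEn, hFk] at h5
    rw [hDdef]; push_cast
    linarith
  -- square identities over ℚ
  have hnn : (n:ℝ)^2 = ((a - b - d)/2)^2 + c^2 := by
    have h6 := hE2; rw [hEn] at h6; linear_combination h6/4
  have hkk : (k:ℝ)^2 = ((a - b + d)/2)^2 + c^2 := by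
    have h6 := hF2; rw [hFk] at h6; linear_combination h6/4
  obtain ⟨aq, haq⟩ := hqrat 1 le_rfl (by norm_num)
  obtain ⟨bq, hbq⟩ := hqrat 2 (by norm_num) (by norm_num)
  obtain ⟨cq, hcq⟩ := hrrat 1 le_rfl (by norm_num)
  set ξq : ℚ := (aq - bq - (D:ℚ))/2 with hξq
  have hξR : ((ξq:ℚ):ℝ) = (a - b - d)/2 := by
    rw [hξq]; push_cast; rw [← haq, ← hbq, hdD]
  have hηR : ((ξq + (D:ℚ) :ℚ):ℝ) = (a - b + d)/2 := by
    push_cast; rw [hξR, hdD]; push_cast; ring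
  have hcR : ((cq:ℚ):ℝ) = c := hcq.symm
  have hQn : (n:ℚ)^2 = ξq^2 + cq^2 := by
    have h7 : (n:ℝ)^2 = ((ξq:ℚ):ℝ)^2 + ((cq:ℚ):ℝ)^2 := by rw [hξR, hcR]; exact hnn
    exact_mod_cast h7
  have hQk : (k:ℚ)^2 = (ξq + (D:ℚ))^2 + cq^2 := by
    have h7 : (k:ℝ)^2 = ((ξq + (D:ℚ):ℚ):ℝ)^2 + ((cq:ℚ):ℝ)^2 := by rw [hηR, hcR]; exact hkk
    exact_mod_cast h7
  set N : ℤ := k^2 - n^2 - D^2 with hNdef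
  have hNQ : (N:ℚ) = 2*(D:ℚ)*ξq := by
    rw [hNdef]; push_cast; linear_combination hQk - hQn
  set P : ℤ := ξq.num * (cq.den:ℤ) with hP
  set R : ℤ := cq.num * (ξq.den:ℤ) with hR
  set S : ℤ := (ξq.den:ℤ) * (cq.den:ℤ) with hS
  have hSne : S ≠ 0 := by
    rw [hS]
    exact mul_ne_zero (Int.natCast_ne_zero.2 ξq.den_nz) (Int.natCast_ne_zero.2 cq.den_nz)
  have hPQ : (P:ℚ) = ξq * (S:ℚ) := by
    rw [hP, hS]; push_cast; rw [← Rat.mul_den_eq_num ξq]; ring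
  have hRQ : (R:ℚ) = cq * (S:ℚ) := by
    rw [hR, hS]; push_cast; rw [← Rat.mul_den_eq_num cq]; ring
  have hPR : P^2 + R^2 = n^2 * S^2 := by
    have h8 : (P:ℚ)^2 + (R:ℚ)^2 = (n:ℚ)^2*(S:ℚ)^2 := by
      rw [hPQ, hRQ]; linear_combination (-(S:ℚ)^2) * hQn
    exact_mod_cast h8
  have hNS : N*S = 2*D*P := by
    have h8 : (N:ℚ)*(S:ℚ) = 2*(D:ℚ)*(P:ℚ) := by rw [hNQ, hPQ]; ring
    exact_mod_cast h8
  obtain ⟨t, ht⟩ := evenN S.natAbs S P R n N D rfl hSne hPR hNS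
  -- final parity contradiction
  have hsq2 : ∀ x : ZMod 2, x^2 = x := by decide
  have hz1 : ((k:ZMod 2)) - (n:ZMod 2) - (D:ZMod 2) = 0 := by
    have h6 : ((N:ℤ) : ZMod 2) = 0 := by
      rw [ht]; push_cast
      first
        | exact CharTwo.add_self_eq_zero _
        | (rw [← two_mul]; rw [show ((2:ZMod 2)) = 0 from by decide]; ring)
        | (rw [mul_comm, ← two_mul?]; ring)
    rw [hNdef] at h6
    push_cast at h6
    rw [hsq2, hsq2, hsq2] at h6
    exact h6
  have hz2 : (D : ZMod 2) = 1 + 2*(m : ZMod 2) - (n:ZMod 2) + (k:ZMod 2) := by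
    have h6 : ((D:ℤ) : ZMod 2) = ((1 + 2*m - n + k : ℤ) : ZMod 2) := by rw [hDdef]
    push_cast at h6
    exact h6
  have hfin : ∀ x y z mm : ZMod 2, z = 1 + 2*mm - y + x → x - y - z = 0 → False := by decide
  exact hfin _ _ _ _ hz2 hz1
end

section
/- Let n ≥ 3 be odd with n ≡ 3 (mod 8) or n ≡ 5 (mod 8), and let α_1, ..., α_n be integers such that α_r is odd whenever r is odd and α_r is even whenever r is even. Set S_1 = Σ_{r=1}^n (-1)^{r+n} α_r and S_2 = Σ_{r=1}^n (-1)^{r+n} α_r². Then S_2 - S_1² is not a perfect square; in fact there is no integer k with k² = S_2 - S_1². -/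
lemma count_odd_Icc (n : ℕ) : ((Finset.Icc 1 n).filter (fun r => Odd r)).card = (n+1)/2 := by
  induction n with
  | zero => decide
  | succ n ih =>
    rw [show Finset.Icc 1 (n+1) = insert (n+1) (Finset.Icc 1 n) by
      ext x; simp [Finset.mem_Icc]; omega]
    rw [Finset.filter_insert]
    rcases Nat.even_or_odd n with he | ho
    · rw [if_pos (Even.add_one he), Finset.card_insert_of_notMem (by simp), ih]
      obtain ⟨m, hm⟩ := he; omega
    · rw [if_neg (by simp [Nat.even_add_one, Nat.not_even_iff_odd.mpr ho]), ih]
      obtain ⟨m, hm⟩ := ho; omega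

lemma sq_ne_two_zmod4 : ∀ x : ZMod 4, x ^ 2 ≠ 2 := by decide

/-- Let `n ≥ 3` be odd with `n ≡ 3 (mod 8)` or `n ≡ 5 (mod 8)`, and let
`α 1, …, α n` be integers with `α r` odd for `r` odd and `α r` even for `r` even.
Then `S₂ - S₁²` is not a perfect square, where `S₁ = ∑ (-1)^(r+n) α r` and
`S₂ = ∑ (-1)^(r+n) (α r)^2`. -/
theorem alternating_sum_not_square (n : ℕ) (hn : 3 ≤ n) (hodd : Odd n)
    (hmod : n % 8 = 3 ∨ n % 8 = 5) (α : ℕ → ℤ)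
    (hpar : ∀ r, 1 ≤ r → r ≤ n → (Odd r → Odd (α r)) ∧ (Even r → Even (α r)))
    (S₁ S₂ : ℤ)
    (hS₁ : S₁ = ∑ r ∈ Finset.Icc 1 n, (-1 : ℤ) ^ (r + n) * α r)
    (hS₂ : S₂ = ∑ r ∈ Finset.Icc 1 n, (-1 : ℤ) ^ (r + n) * (α r) ^ 2) :
    ¬ ∃ k : ℤ, k ^ 2 = S₂ - S₁ ^ 2 := by
  -- S₂ mod 4
  have h4 : (4 : ZMod 4) = 0 := by decide
  have h2 : (2 : ZMod 2) = 0 := by decide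
  have hS2mod : ((S₂ : ZMod 4)) = (((n+1)/2 : ℕ) : ZMod 4) := by
    rw [hS₂]
    push_cast
    rw [Finset.sum_congr rfl (g := fun r => if Odd r then (1 : ZMod 4) else 0) ?_]
    · rw [Finset.sum_ite, Finset.sum_const, Finset.sum_const, count_odd_Icc]
      simp
    · intro r hr
      simp only [Finset.mem_Icc] at hr
      by_cases hro : Odd r
      · simp only [if_pos hro]
        obtain ⟨m, hm⟩ := (hpar r hr.1 hr.2).1 hro
        have hre : Even (r + n) := hro.add_odd hodd
        obtain ⟨t, ht⟩ := hre
        rw [ht, hm, ← two_mul, pow_mul]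
        push_cast
        ring_nf
        linear_combination (((m : ZMod 4))^2 + m) * h4
      · simp only [if_neg hro]
        obtain ⟨m, hm⟩ := (hpar r hr.1 hr.2).2 (Nat.not_odd_iff_even.mp hro)
        rw [hm, ← two_mul]
        push_cast
        ring_nf
        linear_combination ((-1 : ZMod 4))^(r + n) * ((m : ZMod 4))^2 * h4
  -- S₁ mod 2
  have hS1mod : ((S₁ : ZMod 2)) = (((n+1)/2 : ℕ) : ZMod 2) := by
    rw [hS₁]
    push_cast
    rw [Finset.sum_congr rfl (g := fun r => if Odd r then (1 : ZMod 2) else 0) ?_]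
    · rw [Finset.sum_ite, Finset.sum_const, Finset.sum_const, count_odd_Icc]
      simp
    · intro r hr
      simp only [Finset.mem_Icc] at hr
      by_cases hro : Odd r
      · simp only [if_pos hro]
        obtain ⟨m, hm⟩ := (hpar r hr.1 hr.2).1 hro
        rw [hm]
        push_cast
        have hneg : (-1 : ZMod 2) = 1 := by decide
        rw [hneg, one_pow]
        linear_combination ((m : ZMod 2)) * h2
      · simp only [if_neg hro]
        obtain ⟨m, hm⟩ := (hpar r hr.1 hr.2).2 (Nat.not_odd_iff_even.mp hro)
        rw [hm, ← two_mul]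
        push_cast
        linear_combination ((-1 : ZMod 2))^(r + n) * ((m : ZMod 2)) * h2
  rintro ⟨k, hk⟩
  have hcast : ((k : ZMod 4))^2 = (S₂ : ZMod 4) - ((S₁ : ZMod 4))^2 := by
    have := congrArg (fun z : ℤ => (z : ZMod 4)) hk
    push_cast at this
    exact this
  -- determine parity of S₁ and compute S₁² mod 4
  have hS1sq : ((S₁ : ZMod 4))^2 = (if S₁ % 2 = 0 then 0 else 1) := by
    rcases Int.even_or_odd S₁ with ⟨m, hm⟩ | ⟨m, hm⟩
    · rw [if_pos (by omega), hm, ← two_mul]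
      push_cast
      linear_combination ((m : ZMod 4))^2 * h4
    · rw [if_neg (by omega), hm]
      push_cast
      linear_combination (((m : ZMod 4))^2 + m) * h4
  -- parity of S₁ from hS1mod
  have hparS1 : S₁ % 2 = ((n+1)/2 : ℕ) % 2 := by
    have h0 : ((S₁ - ((n+1)/2 : ℕ) : ℤ) : ZMod 2) = 0 := by
      rw [Int.cast_sub, Int.cast_natCast, hS1mod, sub_self]
    have hdvd := (ZMod.intCast_zmod_eq_zero_iff_dvd _ 2).mp h0
    omega
  rcases hmod with h | h
  · -- n = 8t+3, (n+1)/2 = 4t+2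
    obtain ⟨t, ht⟩ : ∃ t, n = 8 * t + 3 := ⟨n / 8, by omega⟩
    have hq : (n+1)/2 = 4 * t + 2 := by omega
    have hcast4 : (((n+1)/2 : ℕ) : ZMod 4) = 2 := by
      rw [hq]; push_cast; linear_combination (t : ZMod 4) * h4
    have hpar1 : S₁ % 2 = 0 := by rw [hparS1, hq]; omega
    rw [hS2mod, hcast4, hS1sq, if_pos hpar1, sub_zero] at hcast
    exact sq_ne_two_zmod4 _ hcast
  · obtain ⟨t, ht⟩ : ∃ t, n = 8 * t + 5 := ⟨n / 8, by omega⟩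
    have hq : (n+1)/2 = 4 * t + 3 := by omega
    have hcast4 : (((n+1)/2 : ℕ) : ZMod 4) = 3 := by
      rw [hq]; push_cast; linear_combination (t : ZMod 4) * h4
    have hpar1 : S₁ % 2 = 1 := by rw [hparS1, hq]; omega
    rw [hS2mod, hcast4, hS1sq, if_neg (by omega)] at hcast
    exact sq_ne_two_zmod4 _ (by rw [hcast]; decide)
end
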